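/- arXiv:2603.28078 — 9 statements merged into one kernel-verified Lean document; each statement's English description precedes it below -/
import Mathlib

section
/- Let α<β and let g:[α,β]→ℝ be continuous and non-decreasing. For γ ∈ [α,β] set F(γ) = ∫_α^γ (g(x)−g(α))² dx + ∫_γ^β (g(β)−g(x))² dx. Then a point γ* ∈ [α,β] minimizes F over [α,β] if and only if g(γ*) = (g(α)+g(β))/2. -/
open intervalIntegral

/-- For continuous non-decreasing `g` on `[α,β]`, the fidelity
`F(γ) = ∫_α^γ (g(x)-g(α))² dx + ∫_γ^β (g(β)-g(x))² dx` is minimized over `[α,β]`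
at `γ*` if and only if `g(γ*) = (g(α)+g(β))/2`. -/
theorem fidelity_min_iff_midpoint (α β : ℝ) (hab : α < β) (g : ℝ → ℝ)
    (hgc : ContinuousOn g (Set.Icc α β)) (hgm : MonotoneOn g (Set.Icc α β))
    (γs : ℝ) (hγs : γs ∈ Set.Icc α β) :
    (∀ γ ∈ Set.Icc α β,
        (∫ x in α..γs, (g x - g α) ^ 2) + (∫ x in γs..β, (g β - g x) ^ 2) ≤
          (∫ x in α..γ, (g x - g α) ^ 2) + (∫ x in γ..β, (g β - g x) ^ 2)) ↔
      g γs = (g α + g β) / 2 := by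
  obtain ⟨hαγ, hγβ⟩ := hγs
  have hmem : γs ∈ Set.Icc α β := ⟨hαγ, hγβ⟩
  have hαm : α ∈ Set.Icc α β := ⟨le_refl _, hab.le⟩
  have hβm : β ∈ Set.Icc α β := ⟨hab.le, le_refl _⟩
  have hc : 0 ≤ g β - g α := sub_nonneg.2 (hgm hαm hβm hab.le)
  set h : ℝ → ℝ := fun x => 2 * g x - g α - g β with hh
  have contA : ContinuousOn (fun x => (g x - g α) ^ 2) (Set.Icc α β) :=
    (hgc.sub continuousOn_const).pow 2
  have contB : ContinuousOn (fun x => (g β - g x) ^ 2) (Set.Icc α β) :=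
    (continuousOn_const.sub hgc).pow 2
  have conth : ContinuousOn h (Set.Icc α β) :=
    ((continuousOn_const.mul hgc).sub continuousOn_const).sub continuousOn_const
  have intA : ∀ a ∈ Set.Icc α β, ∀ b ∈ Set.Icc α β,
      IntervalIntegrable (fun x => (g x - g α) ^ 2) MeasureTheory.volume a b :=
    fun a ha b hb => (contA.mono (Set.uIcc_subset_Icc ha hb)).intervalIntegrable
  have intB : ∀ a ∈ Set.Icc α β, ∀ b ∈ Set.Icc α β,
      IntervalIntegrable (fun x => (g β - g x) ^ 2) MeasureTheory.volume a b :=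
    fun a ha b hb => (contB.mono (Set.uIcc_subset_Icc ha hb)).intervalIntegrable
  have inth : ∀ a ∈ Set.Icc α β, ∀ b ∈ Set.Icc α β,
      IntervalIntegrable h MeasureTheory.volume a b :=
    fun a ha b hb => (conth.mono (Set.uIcc_subset_Icc ha hb)).intervalIntegrable
  -- key identity : F(γ) - F(γs) = (g β - g α) * ∫_{γs}^γ h
  have key : ∀ γ ∈ Set.Icc α β,
      ((∫ x in α..γ, (g x - g α) ^ 2) + ∫ x in γ..β, (g β - g x) ^ 2) -
        ((∫ x in α..γs, (g x - g α) ^ 2) + ∫ x in γs..β, (g β - g x) ^ 2) =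
        (g β - g α) * ∫ x in γs..γ, h x := by
    intro γ hγ
    have e1 := integral_add_adjacent_intervals (intA α hαm γs hmem) (intA γs hmem γ hγ)
    have e2 := integral_add_adjacent_intervals (intB γ hγ γs hmem) (intB γs hmem β hβm)
    have e3 : (∫ x in γ..γs, (g β - g x) ^ 2) = - ∫ x in γs..γ, (g β - g x) ^ 2 :=
      integral_symm γs γ
    have e4 : (∫ x in γs..γ, (g x - g α) ^ 2) - (∫ x in γs..γ, (g β - g x) ^ 2) =
        ∫ x in γs..γ, ((g x - g α) ^ 2 - (g β - g x) ^ 2) :=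
      (integral_sub (intA γs hmem γ hγ) (intB γs hmem γ hγ)).symm
    have e5 : (∫ x in γs..γ, ((g x - g α) ^ 2 - (g β - g x) ^ 2)) =
        ∫ x in γs..γ, (g β - g α) * h x :=
      integral_congr (fun x _ => by simp only [hh]; ring)
    have e6 : (∫ x in γs..γ, (g β - g α) * h x) = (g β - g α) * ∫ x in γs..γ, h x :=
      integral_const_mul _ _
    linarith
  constructor
  · intro hmin
    rcases eq_or_lt_of_le hc with hc0 | hcpos
    · have h1 := hgm hαm hmem hαγ
      have h2 := hgm hmem hβm hγβ
      linarith
    · have hint : ∀ γ ∈ Set.Icc α β, 0 ≤ ∫ x in γs..γ, h x := by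
        intro γ hγ
        have h1 := hmin γ hγ
        have h2 := key γ hγ
        nlinarith [hcpos]
      have hge : ∀ γ ∈ Set.Ioc γs β, 0 ≤ h γ := by
        intro γ hγ
        have hγIcc : γ ∈ Set.Icc α β := ⟨hαγ.trans hγ.1.le, hγ.2⟩
        have hb : (∫ x in γs..γ, h x) ≤ (γ - γs) * h γ := by
          have hm : ∀ x ∈ Set.Icc γs γ, h x ≤ h γ := by
            intro x hx
            have : g x ≤ g γ := hgm ⟨hαγ.trans hx.1, hx.2.trans hγ.2⟩ hγIcc hx.2
            simp only [hh]; linarith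
          have h1 := integral_mono_on hγ.1.le (inth γs hmem γ hγIcc)
            intervalIntegrable_const hm
          have h2 : (∫ _x in γs..γ, h γ) = (γ - γs) * h γ := by
            rw [integral_const, smul_eq_mul]
          exact h1.trans_eq h2
        have h0 := hint γ hγIcc
        nlinarith [hγ.1]
      have hle : ∀ γ ∈ Set.Ico α γs, h γ ≤ 0 := by
        intro γ hγ
        have hγIcc : γ ∈ Set.Icc α β := ⟨hγ.1, hγ.2.le.trans hγβ⟩
        have hb : (γs - γ) * h γ ≤ ∫ x in γ..γs, h x := by
          have hm : ∀ x ∈ Set.Icc γ γs, h γ ≤ h x := by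
            intro x hx
            have : g γ ≤ g x := hgm hγIcc ⟨hγ.1.trans hx.1, hx.2.trans hγβ⟩ hx.1
            simp only [hh]; linarith
          have h1 := integral_mono_on hγ.2.le intervalIntegrable_const
            (inth γ hγIcc γs hmem) hm
          have h2 : (∫ _x in γ..γs, h γ) = (γs - γ) * h γ := by
            rw [integral_const, smul_eq_mul]
          exact h2.symm.trans_le h1
        have h0 := hint γ hγIcc
        have hs : (∫ x in γs..γ, h x) = - ∫ x in γ..γs, h x := integral_symm γ γs
        nlinarith [hγ.2]
      have hge0 : 0 ≤ h γs := by
        rcases lt_or_eq_of_le hγβ with hlt | heq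
        · have hcw : ContinuousWithinAt h (Set.Ioc γs β) γs :=
            ((conth γs hmem).mono (fun x hx => ⟨hαγ.trans hx.1.le, hx.2⟩))
          have hne : (nhdsWithin γs (Set.Ioc γs β)).NeBot := by
            rw [nhdsWithin_Ioc_eq_nhdsGT hlt]; infer_instance
          exact ge_of_tendsto hcw (eventually_nhdsWithin_of_forall hge)
        · simp only [hh, heq]; linarith
      have hle0 : h γs ≤ 0 := by
        rcases lt_or_eq_of_le hαγ with hlt | heq
        · have hcw : ContinuousWithinAt h (Set.Ico α γs) γs :=
            ((conth γs hmem).mono (fun x hx => ⟨hx.1, hx.2.le.trans hγβ⟩))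
          have hne : (nhdsWithin γs (Set.Ico α γs)).NeBot := by
            rw [nhdsWithin_Ico_eq_nhdsLT hlt]; infer_instance
          exact le_of_tendsto hcw (eventually_nhdsWithin_of_forall hle)
        · simp only [hh, ← heq]; linarith
      have : h γs = 0 := le_antisymm hle0 hge0
      simp only [hh] at this
      linarith
  · intro hmid γ hγ
    have hk := key γ hγ
    have hI : 0 ≤ ∫ x in γs..γ, h x := by
      rcases le_total γs γ with hle' | hle'
      · apply integral_nonneg hle'
        intro u hu
        have : g γs ≤ g u := hgm hmem ⟨hαγ.trans hu.1, hu.2.trans hγ.2⟩ hu.1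
        simp only [hh]; linarith
      · have hnp : (∫ x in γ..γs, h x) ≤ 0 := by
          have h1 : 0 ≤ ∫ x in γ..γs, (-h x) := by
            apply integral_nonneg hle'
            intro u hu
            have : g u ≤ g γs := hgm ⟨hγ.1.trans hu.1, hu.2.trans hγβ⟩ hmem hu.2
            simp only [hh]; linarith
          have h2 : (∫ x in γ..γs, (-h x)) = -(∫ x in γ..γs, h x) := integral_neg
          linarith
        have hs : (∫ x in γs..γ, h x) = - ∫ x in γ..γs, h x := integral_symm γ γs
        linarith
    nlinarith [mul_nonneg hc hI]
end

section
/- Let α<β, let g:[α,β]→ℝ be continuous and non-decreasing, set ρ := g(β)−g(α), let γ ∈ [α,β] satisfy g(γ) = (g(α)+g(β))/2, and define U₀ = g(α) on [α,γ) and U₀ = g(β) on [γ,β]. Let δ ∈ (0,1) and, for any α ≤ x₁ ≤ x₂ ≤ β, define v = g(α) on [α,x₁), v = g(α)+δρ on [x₁,x₂), and v = g(β) on [x₂,β]. Then ∫_α^β (U₀−g)² dx − ∫_α^β (v−g)² dx ≤ δ(1−δ) ρ² (β−α). -/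
open intervalIntegral

set_option maxHeartbeats 1000000

/-- Fidelity comparison (Lemma on the increase of fidelity): for continuous
non-decreasing `g` on `[α,β]`, `ρ = g(β) - g(α)`, `U₀` the one-jump step function
jumping at a point `γ` with `g(γ) = (g(α)+g(β))/2`, and `v` any non-decreasing step
function with the three values `g(α)`, `g(α)+δρ`, `g(β)`,
`∫ (U₀ - g)² - ∫ (v - g)² ≤ δ(1-δ)ρ²(β-α)`. -/
theorem fidelity_increase_bound (α β : ℝ) (hab : α < β) (g : ℝ → ℝ)
    (hgc : ContinuousOn g (Set.Icc α β)) (hgm : MonotoneOn g (Set.Icc α β))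
    (γ : ℝ) (hγ : γ ∈ Set.Icc α β) (hγmid : g γ = (g α + g β) / 2)
    (δ : ℝ) (hδ : δ ∈ Set.Ioo (0 : ℝ) 1)
    (x₁ x₂ : ℝ) (h1 : α ≤ x₁) (h12 : x₁ ≤ x₂) (h2 : x₂ ≤ β) :
    (∫ x in α..β, ((if x < γ then g α else g β) - g x) ^ 2) -
        (∫ x in α..β,
          ((if x < x₁ then g α else if x < x₂ then g α + δ * (g β - g α) else g β) - g x) ^ 2) ≤
      δ * (1 - δ) * (g β - g α) ^ 2 * (β - α) := by
  obtain ⟨hδ0, hδ1⟩ := hδ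
  set a := g α with ha
  set b := g β with hb
  set c := a + δ * (b - a) with hc
  set K := δ * (1 - δ) * (b - a) ^ 2 with hKdef
  have hαm : α ∈ Set.Icc α β := ⟨le_refl α, hab.le⟩
  have hβm : β ∈ Set.Icc α β := ⟨hab.le, le_refl β⟩
  have hx1m : x₁ ∈ Set.Icc α β := ⟨h1, h12.trans h2⟩
  have hx2m : x₂ ∈ Set.Icc α β := ⟨h1.trans h12, h2⟩
  have hba : a ≤ b := hgm hαm hβm hab.le
  have hK : 0 ≤ K := by
    apply mul_nonneg (mul_nonneg hδ0.le (by linarith)) (sq_nonneg _)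
  -- integrability of (p - g x)^2 between any two points of [α,β]
  have key : ∀ (p : ℝ), ∀ s ∈ Set.Icc α β, ∀ t ∈ Set.Icc α β,
      IntervalIntegrable (fun x => (p - g x) ^ 2) MeasureTheory.volume s t := by
    intro p s hs t ht
    exact ((continuousOn_const.sub (hgc.mono (Set.uIcc_subset_Icc hs ht))).pow
      2).intervalIntegrable
  have hne : ∀ (y : ℝ), ∀ᵐ x : ℝ, x ≠ y := by
    intro y
    rw [MeasureTheory.ae_iff]
    simp
  -- ae equalities on pieces
  have EU1 : ∀ᵐ x : ℝ, x ∈ Set.uIoc α γ →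
      ((if x < γ then a else b) - g x) ^ 2 = (a - g x) ^ 2 := by
    filter_upwards [hne γ] with x hx hmem
    rw [Set.uIoc_of_le hγ.1] at hmem
    rw [if_pos (lt_of_le_of_ne hmem.2 hx)]
  have EU2 : ∀ᵐ x : ℝ, x ∈ Set.uIoc γ β →
      ((if x < γ then a else b) - g x) ^ 2 = (b - g x) ^ 2 := by
    filter_upwards with x hmem
    rw [Set.uIoc_of_le hγ.2] at hmem
    rw [if_neg (not_lt.2 hmem.1.le)]
  have EV1 : ∀ᵐ x : ℝ, x ∈ Set.uIoc α x₁ →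
      ((if x < x₁ then a else if x < x₂ then c else b) - g x) ^ 2 = (a - g x) ^ 2 := by
    filter_upwards [hne x₁] with x hx hmem
    rw [Set.uIoc_of_le h1] at hmem
    rw [if_pos (lt_of_le_of_ne hmem.2 hx)]
  have EV2 : ∀ᵐ x : ℝ, x ∈ Set.uIoc x₁ x₂ →
      ((if x < x₁ then a else if x < x₂ then c else b) - g x) ^ 2 = (c - g x) ^ 2 := by
    filter_upwards [hne x₂] with x hx hmem
    rw [Set.uIoc_of_le h12] at hmem
    rw [if_neg (not_lt.2 hmem.1.le), if_pos (lt_of_le_of_ne hmem.2 hx)]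
  have EV3 : ∀ᵐ x : ℝ, x ∈ Set.uIoc x₂ β →
      ((if x < x₁ then a else if x < x₂ then c else b) - g x) ^ 2 = (b - g x) ^ 2 := by
    filter_upwards with x hmem
    rw [Set.uIoc_of_le h2] at hmem
    rw [if_neg (not_lt.2 (h12.trans hmem.1.le)), if_neg (not_lt.2 hmem.1.le)]
  -- step-function integrands are interval integrable
  have istep : ∀ (f : ℝ → ℝ) (p : ℝ), ∀ s ∈ Set.Icc α β, ∀ t ∈ Set.Icc α β,
      (∀ᵐ x : ℝ, x ∈ Set.uIoc s t → f x = (p - g x) ^ 2) →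
      IntervalIntegrable f MeasureTheory.volume s t := by
    intro f p s hs t ht hE
    apply (key p s hs t ht).congr_ae
    exact (MeasureTheory.ae_restrict_iff' measurableSet_uIoc).2
      (hE.mono fun x hx hmem => (hx hmem).symm)
  -- split the U₀ integral
  have hU : (∫ x in α..β, ((if x < γ then a else b) - g x) ^ 2)
      = (∫ x in α..γ, (a - g x) ^ 2) + ∫ x in γ..β, (b - g x) ^ 2 := by
    rw [← integral_add_adjacent_intervals (istep _ a α hαm γ hγ EU1)
      (istep _ b γ hγ β hβm EU2), integral_congr_ae EU1, integral_congr_ae EU2]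
  -- split the v integral
  have iV1 := istep _ a α hαm x₁ hx1m EV1
  have iV2 := istep _ c x₁ hx1m x₂ hx2m EV2
  have iV3 := istep _ b x₂ hx2m β hβm EV3
  have hV : (∫ x in α..β, ((if x < x₁ then a else if x < x₂ then c else b) - g x) ^ 2)
      = (∫ x in α..x₁, (a - g x) ^ 2) + (∫ x in x₁..x₂, (c - g x) ^ 2)
        + ∫ x in x₂..β, (b - g x) ^ 2 := by
    rw [← integral_add_adjacent_intervals (iV1.trans iV2) iV3,
      ← integral_add_adjacent_intervals iV1 iV2,
      integral_congr_ae EV1, integral_congr_ae EV2, integral_congr_ae EV3]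
  -- rearrangement identities for the constant-value integrals
  have e1 := integral_add_adjacent_intervals (key a α hαm x₁ hx1m) (key a x₁ hx1m γ hγ)
  have e2 := integral_add_adjacent_intervals (key b γ hγ x₂ hx2m) (key b x₂ hx2m β hβm)
  have e3 := integral_add_adjacent_intervals (key c x₁ hx1m γ hγ) (key c γ hγ x₂ hx2m)
  have s1 : (∫ x in x₁..γ, ((a - g x) ^ 2 - (c - g x) ^ 2))
      = (∫ x in x₁..γ, (a - g x) ^ 2) - ∫ x in x₁..γ, (c - g x) ^ 2 :=
    integral_sub (key a x₁ hx1m γ hγ) (key c x₁ hx1m γ hγ)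
  have s2 : (∫ x in γ..x₂, ((b - g x) ^ 2 - (c - g x) ^ 2))
      = (∫ x in γ..x₂, (b - g x) ^ 2) - ∫ x in γ..x₂, (c - g x) ^ 2 :=
    integral_sub (key b γ hγ x₂ hx2m) (key c γ hγ x₂ hx2m)
  -- bound the first difference term
  have hT1 : (∫ x in x₁..γ, ((a - g x) ^ 2 - (c - g x) ^ 2)) ≤ K * max (γ - x₁) 0 := by
    rcases le_total x₁ γ with h | h
    · have hpt : ∀ x ∈ Set.Icc x₁ γ, (a - g x) ^ 2 - (c - g x) ^ 2 ≤ K := by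
        intro x hx
        have hxm : x ∈ Set.Icc α β := ⟨h1.trans hx.1, hx.2.trans hγ.2⟩
        have hgx : g x ≤ g γ := hgm hxm hγ hx.2
        have hmid : a + b - 2 * g x ≥ 0 := by rw [hγmid] at hgx; linarith
        simp only [hc, hKdef]
        nlinarith [mul_nonneg (mul_nonneg hδ0.le (sub_nonneg.2 hba)) hmid]
      calc (∫ x in x₁..γ, ((a - g x) ^ 2 - (c - g x) ^ 2))
          ≤ ∫ _x in x₁..γ, K :=
            integral_mono_on h ((key a x₁ hx1m γ hγ).sub (key c x₁ hx1m γ hγ))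
              intervalIntegrable_const hpt
        _ = (γ - x₁) • K := integral_const K
        _ = K * max (γ - x₁) 0 := by
            rw [max_eq_left (by linarith : (0:ℝ) ≤ γ - x₁)]; rw [smul_eq_mul]; ring
    · have hpt : ∀ x ∈ Set.Icc γ x₁, 0 ≤ (a - g x) ^ 2 - (c - g x) ^ 2 := by
        intro x hx
        have hxm : x ∈ Set.Icc α β := ⟨hγ.1.trans hx.1, hx.2.trans hx1m.2⟩
        have hgx : g γ ≤ g x := hgm hγ hxm hx.1
        have hmid : 2 * g x - (a + b) ≥ 0 := by rw [hγmid] at hgx; linarith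
        simp only [hc, hKdef]
        nlinarith [mul_nonneg (mul_nonneg hδ0.le (sub_nonneg.2 hba)) hmid,
          mul_nonneg (mul_nonneg hδ0.le (sub_nonneg.2 hba))
            (mul_nonneg (by linarith : (0:ℝ) ≤ 1 - δ) (sub_nonneg.2 hba))]
      have hnn : 0 ≤ ∫ x in γ..x₁, ((a - g x) ^ 2 - (c - g x) ^ 2) :=
        integral_nonneg h hpt
      have hsym : (∫ x in x₁..γ, ((a - g x) ^ 2 - (c - g x) ^ 2))
          = -∫ x in γ..x₁, ((a - g x) ^ 2 - (c - g x) ^ 2) := integral_symm γ x₁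
      have : (0:ℝ) ≤ K * max (γ - x₁) 0 := mul_nonneg hK (le_max_right _ _)
      linarith
  -- bound the second difference term
  have hT2 : (∫ x in γ..x₂, ((b - g x) ^ 2 - (c - g x) ^ 2)) ≤ K * max (x₂ - γ) 0 := by
    rcases le_total γ x₂ with h | h
    · have hpt : ∀ x ∈ Set.Icc γ x₂, (b - g x) ^ 2 - (c - g x) ^ 2 ≤ K := by
        intro x hx
        have hxm : x ∈ Set.Icc α β := ⟨hγ.1.trans hx.1, hx.2.trans h2⟩
        have hgx : g γ ≤ g x := hgm hγ hxm hx.1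
        have hmid : 2 * g x - (a + b) ≥ 0 := by rw [hγmid] at hgx; linarith
        simp only [hc, hKdef]
        nlinarith [mul_nonneg (mul_nonneg (by linarith : (0:ℝ) ≤ 1 - δ)
          (sub_nonneg.2 hba)) hmid]
      calc (∫ x in γ..x₂, ((b - g x) ^ 2 - (c - g x) ^ 2))
          ≤ ∫ _x in γ..x₂, K :=
            integral_mono_on h ((key b γ hγ x₂ hx2m).sub (key c γ hγ x₂ hx2m))
              intervalIntegrable_const hpt
        _ = (x₂ - γ) • K := integral_const K
        _ = K * max (x₂ - γ) 0 := by
            rw [max_eq_left (by linarith : (0:ℝ) ≤ x₂ - γ)]; rw [smul_eq_mul]; ring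
    · have hpt : ∀ x ∈ Set.Icc x₂ γ, 0 ≤ (b - g x) ^ 2 - (c - g x) ^ 2 := by
        intro x hx
        have hxm : x ∈ Set.Icc α β := ⟨hx2m.1.trans hx.1, hx.2.trans hγ.2⟩
        have hgx : g x ≤ g γ := hgm hxm hγ hx.2
        have hmid : a + b - 2 * g x ≥ 0 := by rw [hγmid] at hgx; linarith
        simp only [hc, hKdef]
        nlinarith [mul_nonneg (mul_nonneg (by linarith : (0:ℝ) ≤ 1 - δ)
            (sub_nonneg.2 hba)) hmid,
          mul_nonneg (mul_nonneg (by linarith : (0:ℝ) ≤ 1 - δ) (sub_nonneg.2 hba))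
            (mul_nonneg hδ0.le (sub_nonneg.2 hba))]
      have hnn : 0 ≤ ∫ x in x₂..γ, ((b - g x) ^ 2 - (c - g x) ^ 2) :=
        integral_nonneg h hpt
      have hsym : (∫ x in γ..x₂, ((b - g x) ^ 2 - (c - g x) ^ 2))
          = -∫ x in x₂..γ, ((b - g x) ^ 2 - (c - g x) ^ 2) := integral_symm x₂ γ
      have : (0:ℝ) ≤ K * max (x₂ - γ) 0 := mul_nonneg hK (le_max_right _ _)
      linarith
  -- combine
  have hmax : max (γ - x₁) 0 + max (x₂ - γ) 0 ≤ β - α := by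
    rcases le_total (γ - x₁) 0 with h | h <;> rcases le_total (x₂ - γ) 0 with h' | h'
    · rw [max_eq_right h, max_eq_right h']; linarith
    · rw [max_eq_right h, max_eq_left h']; linarith [hγ.1]
    · rw [max_eq_left h, max_eq_right h']; linarith [hγ.2]
    · rw [max_eq_left h, max_eq_left h']; linarith
  have hfin : K * max (γ - x₁) 0 + K * max (x₂ - γ) 0 ≤ K * (β - α) := by
    rw [← mul_add]; exact mul_le_mul_of_nonneg_left hmax hK
  rw [hU, hV]
  linarith [e1, e2, e3, s1, s2, hT1, hT2, hfin]
end

section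
/- Let K:[0,∞)→[0,∞) be non-decreasing with K(0)=0, let M>0 and C_M>0 satisfy K(ρ₁)+K(ρ₂) ≥ K(ρ₁+ρ₂)+C_M ρ₁ρ₂ for all ρ₁,ρ₂ ≥ 0 with ρ₁+ρ₂ ≤ M. Let α<β, let g:[α,β]→ℝ be continuous and non-decreasing with ρ := g(β)−g(α) ≤ M, let λ>0 and assume C_* := C_M − (β−α)λ/2 > 0. Let γ ∈ [α,β] satisfy g(γ) = (g(α)+g(β))/2 and define U₀ = g(α) on [α,γ), U₀ = g(β) on [γ,β]. Let δ ∈ (0,1) and, for any α ≤ x₁ ≤ x₂ ≤ β, define v = g(α) on [α,x₁), v = g(α)+δρ on [x₁,x₂), v = g(β) on [x₂,β]. Then K(δρ) + K((1−δ)ρ) + (λ/2)∫_α^β (v−g)² dx ≥ K(ρ) + (λ/2)∫_α^β (U₀−g)² dx + C_* δ(1−δ) ρ². -/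
open intervalIntegral MeasureTheory

lemma step_sq_integrable (g : ℝ → ℝ) (α β : ℝ) (hab : α ≤ β)
    (hgc : ContinuousOn g (Set.Icc α β))
    (hbd : ∀ x ∈ Set.Ioc α β, g α ≤ g x ∧ g x ≤ g β)
    (s : ℝ → ℝ) (hs : Measurable s) (hsb : ∀ x, g α ≤ s x ∧ s x ≤ g β) :
    IntervalIntegrable (fun x => (s x - g x) ^ 2) volume α β := by
  rw [intervalIntegrable_iff, Set.uIoc_of_le hab]
  have hg' : AEMeasurable g (volume.restrict (Set.Ioc α β)) :=
    (hgc.mono Set.Ioc_subset_Icc_self).aemeasurable measurableSet_Ioc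
  have hm : AEMeasurable (fun x => (s x - g x) ^ 2) (volume.restrict (Set.Ioc α β)) := by
    have h := hs.aemeasurable.sub hg'
    exact h.pow_const 2
  refine (integrable_const ((g β - g α) ^ 2)).mono' hm.aestronglyMeasurable ?_
  rw [MeasureTheory.ae_restrict_iff' measurableSet_Ioc]
  filter_upwards with x hx
  have h1 := (hbd x hx).1
  have h2 := (hbd x hx).2
  have h3 := (hsb x).1
  have h4 := (hsb x).2
  rw [Real.norm_eq_abs, abs_of_nonneg (sq_nonneg (s x - g x))]
  nlinarith

set_option maxHeartbeats 2000000 in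
/-- Energy comparison between the one-jump step function `U₀` and a two-jump competitor `v`
(Lemma 3.6): under (K1), (K2) with constant `C = C_M`, for continuous non-decreasing `g`
with `ρ = g(β)-g(α) ≤ M` and `C_* = C_M - (β-α)λ/2 > 0`,
`TV_{Kg}(v) ≥ TV_{Kg}(U₀) + C_* δ(1-δ)ρ²`. -/
theorem two_jump_energy_bound (K : ℝ → ℝ)
    (hKnn : ∀ x, 0 ≤ x → 0 ≤ K x) (hK0 : K 0 = 0)
    (hKmono : ∀ x y, 0 ≤ x → x ≤ y → K x ≤ K y)
    (M C lam : ℝ) (hM : 0 < M) (hC : 0 < C) (hlam : 0 < lam)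
    (hK2 : ∀ ρ₁ ρ₂ : ℝ, 0 ≤ ρ₁ → 0 ≤ ρ₂ → ρ₁ + ρ₂ ≤ M →
      K (ρ₁ + ρ₂) + C * ρ₁ * ρ₂ ≤ K ρ₁ + K ρ₂)
    (α β : ℝ) (hab : α < β) (g : ℝ → ℝ)
    (hgc : ContinuousOn g (Set.Icc α β)) (hgm : MonotoneOn g (Set.Icc α β))
    (hρM : g β - g α ≤ M)
    (hCstar : 0 < C - (β - α) * lam / 2)
    (γ : ℝ) (hγ : γ ∈ Set.Icc α β) (hγmid : g γ = (g α + g β) / 2)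
    (δ : ℝ) (hδ : δ ∈ Set.Ioo (0 : ℝ) 1)
    (x₁ x₂ : ℝ) (h1 : α ≤ x₁) (h12 : x₁ ≤ x₂) (h2 : x₂ ≤ β) :
    K (g β - g α) +
        (lam / 2) * (∫ x in α..β, ((if x < γ then g α else g β) - g x) ^ 2) +
        (C - (β - α) * lam / 2) * δ * (1 - δ) * (g β - g α) ^ 2 ≤
      K (δ * (g β - g α)) + K ((1 - δ) * (g β - g α)) +
        (lam / 2) * ∫ x in α..β,
          ((if x < x₁ then g α else if x < x₂ then g α + δ * (g β - g α) else g β) - g x) ^ 2 := by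
  set ρ := g β - g α with hρ
  have hαβ : α ∈ Set.Icc α β := Set.left_mem_Icc.mpr hab.le
  have hβm : β ∈ Set.Icc α β := Set.right_mem_Icc.mpr hab.le
  have hρ0 : 0 ≤ ρ := sub_nonneg.mpr (hgm hαβ hβm hab.le)
  obtain ⟨hδ0, hδ1⟩ := hδ
  have hδρ0 : 0 ≤ δ * ρ := mul_nonneg hδ0.le hρ0
  have hδρ1 : 0 ≤ (1 - δ) * ρ := mul_nonneg (by linarith) hρ0
  -- K part from (K2)
  have hKpart : K ρ + C * (δ * ρ) * ((1 - δ) * ρ) ≤ K (δ * ρ) + K ((1 - δ) * ρ) := by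
    have := hK2 (δ * ρ) ((1 - δ) * ρ) hδρ0 hδρ1 (by nlinarith)
    have heq : δ * ρ + (1 - δ) * ρ = ρ := by ring
    rwa [heq] at this
  -- step functions
  set s₁ : ℝ → ℝ := fun x => if x < γ then g α else g β with hs₁def
  set s₂ : ℝ → ℝ := fun x => if x < x₁ then g α else if x < x₂ then g α + δ * ρ else g β
    with hs₂def
  clear_value ρ s₁ s₂
  have hbd : ∀ x ∈ Set.Ioc α β, g α ≤ g x ∧ g x ≤ g β := fun x hx =>
    ⟨hgm hαβ (Set.Ioc_subset_Icc_self hx) hx.1.le,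
     hgm (Set.Ioc_subset_Icc_self hx) hβm hx.2⟩
  have hs₁m : Measurable s₁ := by
    rw [hs₁def]
    exact Measurable.ite (measurableSet_Iio) measurable_const measurable_const
  have hs₂m : Measurable s₂ := by
    rw [hs₂def]
    exact Measurable.ite (measurableSet_Iio) measurable_const
      (Measurable.ite (measurableSet_Iio) measurable_const measurable_const)
  have hs₁b : ∀ x, g α ≤ s₁ x ∧ s₁ x ≤ g β := by
    intro x; simp only [hs₁def]
    split <;> constructor <;> linarith
  have hs₂b : ∀ x, g α ≤ s₂ x ∧ s₂ x ≤ g β := by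
    intro x; simp only [hs₂def]
    split
    · constructor <;> linarith
    · split <;> constructor <;> nlinarith
  have hI₁ : IntervalIntegrable (fun x => (s₁ x - g x) ^ 2) volume α β :=
    step_sq_integrable g α β hab.le hgc hbd s₁ hs₁m hs₁b
  have hI₂ : IntervalIntegrable (fun x => (s₂ x - g x) ^ 2) volume α β :=
    step_sq_integrable g α β hab.le hgc hbd s₂ hs₂m hs₂b
  -- pointwise inequality
  have hpt : ∀ x ∈ Set.Icc α β, (s₁ x - g x) ^ 2 ≤ (s₂ x - g x) ^ 2 + δ * (1 - δ) * ρ ^ 2 := by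
    intro x hx
    have hga : g α ≤ g x := hgm hαβ hx hx.1
    have hgb : g x ≤ g β := hgm hx hβm hx.2
    simp only [hs₁def, hs₂def]
    rw [hρ]
    have hba : (0:ℝ) ≤ g β - g α := by rw [← hρ]; exact hρ0
    have hd1 : (0:ℝ) ≤ δ * (g β - g α) := mul_nonneg hδ0.le hba
    have hd2 : (0:ℝ) ≤ (1 - δ) * (g β - g α) := mul_nonneg (by linarith) hba
    have hc0 : 0 ≤ δ * (g β - g α) * ((1 - δ) * (g β - g α)) := mul_nonneg hd1 hd2
    by_cases hxγ : x < γ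
    · have hmid : g x ≤ (g α + g β) / 2 := by
        rw [← hγmid]; exact hgm hx hγ hxγ.le
      have hkey : (0:ℝ) ≤ g α + g β - 2 * g x := by linarith
      have hp1 : 0 ≤ δ * (g β - g α) * (g α + g β - 2 * g x) := mul_nonneg hd1 hkey
      have hp2 : 0 ≤ (g β - g α) * (g α + g β - 2 * g x) := mul_nonneg hba hkey
      rw [if_pos hxγ]
      split
      · nlinarith [hc0]
      · split
        · nlinarith [hp1, hc0]
        · nlinarith [hp2, hc0]
    · have hmid : (g α + g β) / 2 ≤ g x := by
        rw [← hγmid]; exact hgm hγ hx (not_lt.mp hxγ)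
      have hkey : (0:ℝ) ≤ 2 * g x - g α - g β := by linarith
      have hp1 : 0 ≤ (1 - δ) * (g β - g α) * (2 * g x - g α - g β) := mul_nonneg hd2 hkey
      have hp2 : 0 ≤ (g β - g α) * (2 * g x - g α - g β) := mul_nonneg hba hkey
      rw [if_neg hxγ]
      split
      · nlinarith [hp2, hc0]
      · split
        · nlinarith [hp1, hc0]
        · nlinarith [hc0]
  -- integral comparison
  have hIc : IntervalIntegrable (fun x => (s₂ x - g x) ^ 2 + δ * (1 - δ) * ρ ^ 2) volume α β :=
    hI₂.add intervalIntegrable_const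
  have hint : (∫ x in α..β, (s₁ x - g x) ^ 2) ≤
      (∫ x in α..β, (s₂ x - g x) ^ 2) + (β - α) * (δ * (1 - δ) * ρ ^ 2) := by
    have := intervalIntegral.integral_mono_on hab.le hI₁ hIc hpt
    rwa [intervalIntegral.integral_add hI₂ intervalIntegrable_const,
      intervalIntegral.integral_const, smul_eq_mul] at this
  -- conclude
  have hCeq : C * (δ * ρ) * ((1 - δ) * ρ) = C * (δ * (1 - δ) * ρ ^ 2) := by ring
  rw [hCeq] at hKpart
  have hlam2 : (0:ℝ) < lam / 2 := by linarith
  have hmul := mul_le_mul_of_nonneg_left hint hlam2.le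
  have key : (lam / 2) * (∫ x in α..β, (s₁ x - g x) ^ 2) ≤
      (lam / 2) * (∫ x in α..β, (s₂ x - g x) ^ 2)
        + (lam / 2) * ((β - α) * (δ * (1 - δ) * ρ ^ 2)) := by
    nlinarith [hmul]
  have hexp : K ρ + (lam / 2) * (∫ x in α..β, (s₁ x - g x) ^ 2) +
      (C - (β - α) * lam / 2) * δ * (1 - δ) * ρ ^ 2 ≤
      K (δ * ρ) + K ((1 - δ) * ρ) + (lam / 2) * (∫ x in α..β, (s₂ x - g x) ^ 2) := by
    nlinarith [hKpart, key]
  simp only [hs₁def, hs₂def] at hexp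
  exact hexp
end

section
/- Let K:[0,2]→[0,∞) and λ>0. Define P(z) = −(K(1−z)+K(1+z)) for z ∈ [−1,1], and assume P is continuously differentiable on [−1,1] and satisfies P'(μz) < μ P'(z) for all z ∈ (0,1] and μ ∈ (0,1). Define E(z) = K(1−z)+K(1+z) + (λ/2)(z²/2 + 1/6) for z ∈ [−1,1]. Then E(z) > min(E(0), E(1)) for every z ∈ (−1,1) with z ≠ 0. -/
/-- Key step of Theorem 4.9: if `P(z) = -(K(1-z)+K(1+z))` is C¹ on `[-1,1]` with
derivative `P'` satisfying `P'(μz) < μ P'(z)` for `z ∈ (0,1]`, `μ ∈ (0,1)`, then the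
energy `E(z) = K(1-z)+K(1+z) + (λ/2)(z²/2 + 1/6)` satisfies
`E(z) > min(E(0), E(1))` for all `z ∈ (-1,1)` with `z ≠ 0`. -/
theorem energy_min_only_at_endpoints (K : ℝ → ℝ)
    (hKnn : ∀ ρ ∈ Set.Icc (0 : ℝ) 2, 0 ≤ K ρ)
    (lam : ℝ) (hlam : 0 < lam)
    (P P' : ℝ → ℝ)
    (hP : ∀ z, P z = -(K (1 - z) + K (1 + z)))
    (hderiv : ∀ z ∈ Set.Icc (-1 : ℝ) 1, HasDerivWithinAt P (P' z) (Set.Icc (-1 : ℝ) 1) z)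
    (hcont : ContinuousOn P' (Set.Icc (-1 : ℝ) 1))
    (hsuper : ∀ z ∈ Set.Ioc (0 : ℝ) 1, ∀ μ ∈ Set.Ioo (0 : ℝ) 1, P' (μ * z) < μ * P' z)
    (E : ℝ → ℝ)
    (hE : ∀ z, E z = K (1 - z) + K (1 + z) + (lam / 2) * (z ^ 2 / 2 + 1 / 6)) :
    ∀ z ∈ Set.Ioo (-1 : ℝ) 1, z ≠ 0 → min (E 0) (E 1) < E z := by
  -- derivative of E on [-1,1]
  have hEderiv : ∀ x ∈ Set.Icc (-1 : ℝ) 1,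
      HasDerivWithinAt E (lam / 2 * x - P' x) (Set.Icc (-1 : ℝ) 1) x := by
    intro x hx
    have h1 : HasDerivWithinAt (fun y : ℝ => -(P y) + lam / 2 * (y ^ 2 / 2 + 1 / 6))
        (-(P' x) + lam / 2 * x) (Set.Icc (-1 : ℝ) 1) x := by
      have hpoly : HasDerivAt (fun y : ℝ => lam / 2 * (y ^ 2 / 2 + 1 / 6)) (lam / 2 * x) x := by
        have h := (((hasDerivAt_pow 2 x).div_const 2).add_const (1 / 6)).const_mul (lam / 2)
        exact h.congr_deriv (by norm_num)
      exact (hderiv x hx).neg.add (hpoly.hasDerivWithinAt)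
    have h2 : HasDerivWithinAt E (-(P' x) + lam / 2 * x) (Set.Icc (-1 : ℝ) 1) x :=
      h1.congr (fun y _ => by rw [hE, hP]; ring) (by rw [hE, hP]; ring)
    convert h2 using 1; ring
  have hEcont : ContinuousOn E (Set.Icc (-1 : ℝ) 1) :=
    fun x hx => (hEderiv x hx).continuousWithinAt
  -- E deriv at interior points
  have hEderivAt : ∀ x ∈ Set.Ioo (-1 : ℝ) 1, deriv E x = lam / 2 * x - P' x := by
    intro x hx
    exact ((hEderiv x (Set.Ioo_subset_Icc_self hx)).hasDerivAt
      (Icc_mem_nhds hx.1 hx.2)).deriv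
  -- Main claim on (0,1)
  have key : ∀ z ∈ Set.Ioo (0 : ℝ) 1, min (E 0) (E 1) < E z := by
    intro z hz
    obtain ⟨hz0, hz1⟩ := hz
    by_cases hcase : lam / 2 * z - P' z ≤ 0
    · -- E strictly decreasing on [z,1]
      have hanti : StrictAntiOn E (Set.Icc z 1) := by
        apply strictAntiOn_of_deriv_neg (convex_Icc z 1)
          (hEcont.mono (Set.Icc_subset_Icc (by linarith) le_rfl))
        intro x hx
        rw [interior_Icc] at hx
        obtain ⟨hx1, hx2⟩ := hx
        have hxI : x ∈ Set.Ioo (-1 : ℝ) 1 := ⟨by linarith, hx2⟩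
        rw [hEderivAt x hxI]
        have hxpos : 0 < x := lt_trans hz0 hx1
        have hμ : z / x ∈ Set.Ioo (0 : ℝ) 1 :=
          ⟨div_pos hz0 hxpos, (div_lt_one hxpos).2 hx1⟩
        have := hsuper x ⟨hxpos, le_of_lt hx2⟩ (z / x) hμ
        rw [div_mul_cancel₀ z (ne_of_gt hxpos)] at this
        -- P' z < (z/x) * P' x ; lam/2 * z ≤ P' z
        have h3 : lam / 2 * z < z / x * P' x := by linarith
        have h5 := mul_lt_mul_of_pos_right h3 hxpos
        have h6 : z / x * P' x * x = z * P' x := by field_simp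
        rw [h6] at h5
        have h4 : lam / 2 * x < P' x :=
          lt_of_mul_lt_mul_left (by linarith [h5]) hz0.le
        linarith
      have h1 : E 1 < E z := hanti ⟨le_rfl, le_of_lt hz1⟩ ⟨le_of_lt hz1, le_rfl⟩ hz1
      exact lt_of_le_of_lt (min_le_right _ _) h1
    · push_neg at hcase
      -- E strictly increasing on [0,z]
      have hmono : StrictMonoOn E (Set.Icc 0 z) := by
        apply strictMonoOn_of_deriv_pos (convex_Icc 0 z)
          (hEcont.mono (Set.Icc_subset_Icc (by linarith) (le_of_lt hz1)))
        intro x hx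
        rw [interior_Icc] at hx
        obtain ⟨hx1, hx2⟩ := hx
        have hxI : x ∈ Set.Ioo (-1 : ℝ) 1 := ⟨by linarith, by linarith⟩
        rw [hEderivAt x hxI]
        have hμ : x / z ∈ Set.Ioo (0 : ℝ) 1 :=
          ⟨div_pos hx1 hz0, (div_lt_one hz0).2 hx2⟩
        have := hsuper z ⟨hz0, le_of_lt hz1⟩ (x / z) hμ
        rw [div_mul_cancel₀ x (ne_of_gt hz0)] at this
        have h3 : P' x < x / z * (lam / 2 * z) := by
          have hxz : 0 < x / z := div_pos hx1 hz0
          nlinarith [this]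
        have heq : x / z * (lam / 2 * z) = lam / 2 * x := by field_simp
        rw [heq] at h3
        linarith
      have h1 : E 0 < E z := hmono ⟨le_rfl, le_of_lt hz0⟩ ⟨le_of_lt hz0, le_rfl⟩ hz0
      exact lt_of_le_of_lt (min_le_left _ _) h1
  -- E is even
  have heven : ∀ z : ℝ, E (-z) = E z := by
    intro z
    rw [hE, hE]
    ring_nf
  intro z hz hzne
  rcases lt_or_gt_of_ne hzne with hneg | hpos
  · have : (-z) ∈ Set.Ioo (0 : ℝ) 1 := ⟨by linarith [hz.1], by linarith [hz.1]⟩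
    have := key (-z) this
    rwa [heven z] at this
  · exact key z ⟨hpos, hz.2⟩
end

section
/- Let L>0 and λ>0, and define E(m) = 1/(L/m + 1) + (λ/24)(L/m)² for real m > 0. Then E(1) = E(2) if and only if λ = 32/(L(L+1)(L+2)). Moreover, if λ = 32/(L(L+1)(L+2)), then there exists m₀ ∈ (1,2) such that E is strictly decreasing on (0,m₀] and strictly increasing on [m₀,∞); in particular E(1) = E(2) < E(m) for every integer m ≥ 3. -/
/-- Strict decrease of `F t = 1/(t+1) + (lam/24) t²` past a critical point:
if `t₁ < t₂ ≤ ts` where `lam·ts·(ts+1)² = 12`, then `F t₂ < F t₁`. -/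
lemma F_dec_aux (lam t₁ t₂ ts : ℝ) (hlam : 0 < lam) (h1 : 0 < t₁) (h12 : t₁ < t₂)
    (h2s : t₂ ≤ ts) (hs : lam * ts * (ts + 1) ^ 2 = 12) :
    1 / (t₂ + 1) + lam / 24 * t₂ ^ 2 < 1 / (t₁ + 1) + lam / 24 * t₁ ^ 2 := by
  have h1p : (0:ℝ) < t₁ + 1 := by linarith
  have h2p : (0:ℝ) < t₂ + 1 := by linarith
  have hts : (0:ℝ) < ts := by linarith
  have key : lam * (t₁ + t₂) * (t₁ + 1) * (t₂ + 1) < 24 := by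
    have e1 : (t₁ + 1) * (t₂ + 1) ≤ (ts + 1) * (ts + 1) :=
      mul_le_mul (by linarith) (by linarith) (by linarith) (by linarith)
    have e3 : (t₁ + t₂) * ((t₁ + 1) * (t₂ + 1)) < (2 * ts) * ((ts + 1) * (ts + 1)) :=
      calc (t₁ + t₂) * ((t₁ + 1) * (t₂ + 1)) ≤ (t₁ + t₂) * ((ts + 1) * (ts + 1)) :=
            mul_le_mul_of_nonneg_left e1 (by linarith)
        _ < (2 * ts) * ((ts + 1) * (ts + 1)) :=
            mul_lt_mul_of_pos_right (by linarith) (by positivity)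
    have e4 := mul_lt_mul_of_pos_left e3 hlam
    have e5 : lam * ((2 * ts) * ((ts + 1) * (ts + 1))) = 24 := by linear_combination 2 * hs
    nlinarith [e4, e5]
  have hdiff : (1 / (t₂ + 1) + lam / 24 * t₂ ^ 2) - (1 / (t₁ + 1) + lam / 24 * t₁ ^ 2)
      = ((t₂ - t₁) * (lam * (t₁ + t₂) * (t₁ + 1) * (t₂ + 1) - 24)) / (24 * (t₁ + 1) * (t₂ + 1)) := by
    field_simp
    ring
  have hneg : ((t₂ - t₁) * (lam * (t₁ + t₂) * (t₁ + 1) * (t₂ + 1) - 24)) / (24 * (t₁ + 1) * (t₂ + 1)) < 0 := by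
    apply div_neg_of_neg_of_pos
    · exact mul_neg_of_pos_of_neg (by linarith) (by linarith)
    · positivity
  linarith [hdiff, hneg]

/-- Strict increase of `F t = 1/(t+1) + (lam/24) t²` past a critical point:
if `ts ≤ t₁ < t₂` where `lam·ts·(ts+1)² = 12`, then `F t₁ < F t₂`. -/
lemma F_inc_aux (lam t₁ t₂ ts : ℝ) (hlam : 0 < lam) (hts : 0 < ts) (hs1 : ts ≤ t₁)
    (h12 : t₁ < t₂) (hs : lam * ts * (ts + 1) ^ 2 = 12) :
    1 / (t₁ + 1) + lam / 24 * t₁ ^ 2 < 1 / (t₂ + 1) + lam / 24 * t₂ ^ 2 := by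
  have h1p : (0:ℝ) < t₁ + 1 := by linarith
  have h2p : (0:ℝ) < t₂ + 1 := by linarith
  have hsp : (0:ℝ) < ts + 1 := by linarith
  have key : 24 < lam * (t₁ + t₂) * (t₁ + 1) * (t₂ + 1) := by
    have e1 : (ts + 1) * (ts + 1) ≤ (t₁ + 1) * (t₂ + 1) :=
      mul_le_mul (by linarith) (by linarith) (by linarith) (by linarith)
    have e3 : (2 * ts) * ((ts + 1) * (ts + 1)) < (t₁ + t₂) * ((t₁ + 1) * (t₂ + 1)) :=
      calc (2 * ts) * ((ts + 1) * (ts + 1)) ≤ (2 * ts) * ((t₁ + 1) * (t₂ + 1)) :=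
            mul_le_mul_of_nonneg_left e1 (by linarith)
        _ < (t₁ + t₂) * ((t₁ + 1) * (t₂ + 1)) :=
            mul_lt_mul_of_pos_right (by linarith) (by positivity)
    have e4 := mul_lt_mul_of_pos_left e3 hlam
    have e5 : lam * ((2 * ts) * ((ts + 1) * (ts + 1))) = 24 := by linear_combination 2 * hs
    nlinarith [e4, e5]
  have hdiff : (1 / (t₂ + 1) + lam / 24 * t₂ ^ 2) - (1 / (t₁ + 1) + lam / 24 * t₁ ^ 2)
      = ((t₂ - t₁) * (lam * (t₁ + t₂) * (t₁ + 1) * (t₂ + 1) - 24)) / (24 * (t₁ + 1) * (t₂ + 1)) := by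
    field_simp
    ring
  have hpos : 0 < ((t₂ - t₁) * (lam * (t₁ + t₂) * (t₁ + 1) * (t₂ + 1) - 24)) / (24 * (t₁ + 1) * (t₂ + 1)) := by
    apply div_pos
    · exact mul_pos (by linarith) (by linarith)
    · positivity
  linarith [hdiff, hpos]

/-- Proposition 4.11: for `E(m) = 1/(L/m + 1) + (λ/24)(L/m)²` (`m > 0`),
`E(1) = E(2)` iff `λ = 32/(L(L+1)(L+2))`; and for this critical `λ` there is
`m₀ ∈ (1,2)` such that `E` is strictly decreasing on `(0,m₀]` and strictly increasing
on `[m₀,∞)`; in particular `E(1) = E(2) < E(m)` for every integer `m ≥ 3`. -/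
theorem critical_lambda (L lam : ℝ) (hL : 0 < L) (hlam : 0 < lam)
    (E : ℝ → ℝ)
    (hE : ∀ m : ℝ, 0 < m → E m = 1 / (L / m + 1) + (lam / 24) * (L / m) ^ 2) :
    (E 1 = E 2 ↔ lam = 32 / (L * (L + 1) * (L + 2))) ∧
      (lam = 32 / (L * (L + 1) * (L + 2)) →
        (∃ m₀ ∈ Set.Ioo (1 : ℝ) 2,
          StrictAntiOn E (Set.Ioc 0 m₀) ∧ StrictMonoOn E (Set.Ici m₀)) ∧
        (E 1 = E 2 ∧ ∀ m : ℕ, 3 ≤ m → E 1 < E (m : ℝ))) := by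
  have hL1 : (0:ℝ) < L + 1 := by linarith
  have hL2 : (0:ℝ) < L + 2 := by linarith
  have hD : (0:ℝ) < L * (L + 1) * (L + 2) := by positivity
  have hE1 : E 1 = 1 / (L + 1) + lam / 24 * L ^ 2 := by
    rw [hE 1 one_pos]; norm_num
  have hE2 : E 2 = 1 / (L / 2 + 1) + lam / 24 * (L / 2) ^ 2 := by
    rw [hE 2 two_pos]
  -- the iff
  have hiff : E 1 = E 2 ↔ lam = 32 / (L * (L + 1) * (L + 2)) := by
    rw [hE1, hE2, eq_div_iff (ne_of_gt hD)]
    constructor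
    · intro h
      have hden : (L / 2 + 1) ≠ 0 := by positivity
      field_simp at h
      have h2 : lam * (L * (L + 1) * (L + 2)) * L = 32 * L := by linear_combination h / 3
      exact mul_right_cancel₀ (ne_of_gt hL) h2
    · intro h
      have hden : (L / 2 + 1) ≠ 0 := by positivity
      field_simp
      nlinarith [h]
  refine ⟨hiff, fun hcrit => ?_⟩
  have hmul : lam * (L * (L + 1) * (L + 2)) = 32 := by
    rw [hcrit]; field_simp
  -- find the critical point ts ∈ (L/2, L) of F via IVT for H t = lam t (t+1)² - 12
  have hcont : ContinuousOn (fun t : ℝ => lam * t * (t + 1) ^ 2 - 12) (Set.Icc (L / 2) L) := by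
    fun_prop
  have hHa : lam * (L / 2) * (L / 2 + 1) ^ 2 - 12 < 0 := by
    nlinarith [hmul, mul_pos hlam hL, mul_pos (mul_pos hlam hL) hL2, sq_nonneg (L + 2)]
  have hHb : 0 < lam * L * (L + 1) ^ 2 - 12 := by
    nlinarith [hmul, mul_pos hlam hL, mul_pos (mul_pos hlam hL) hL1, sq_nonneg (L + 1)]
  have hsub := intermediate_value_Ioo (by linarith : L / 2 ≤ L) hcont
  obtain ⟨ts, htsI, hts0⟩ := hsub (by constructor <;> simpa using by linarith [hHa, hHb] :
    (0:ℝ) ∈ Set.Ioo (lam * (L / 2) * (L / 2 + 1) ^ 2 - 12) (lam * L * (L + 1) ^ 2 - 12))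
  obtain ⟨hts1, hts2⟩ := htsI
  have htsp : 0 < ts := by linarith
  have hs : lam * ts * (ts + 1) ^ 2 = 12 := by
    have := hts0; simp only at this; linarith [this]
  set m₀ := L / ts with hm₀
  have hm₀1 : 1 < m₀ := (one_lt_div htsp).mpr hts2
  have hm₀2 : m₀ < 2 := by
    rw [hm₀, div_lt_iff₀ htsp]; linarith
  have hm₀p : 0 < m₀ := by linarith
  -- strict antitone on (0, m₀]
  have hanti : StrictAntiOn E (Set.Ioc 0 m₀) := by
    intro a ha b hb hab
    obtain ⟨ha0, ham⟩ := ha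
    obtain ⟨hb0, hbm⟩ := hb
    rw [hE a ha0, hE b hb0]
    have h1 : ts ≤ L / b := by
      rw [le_div_iff₀ hb0]
      have := (le_div_iff₀ htsp).mp hbm
      linarith [this]
    have h2 : L / b < L / a := div_lt_div_of_pos_left hL ha0 hab
    exact F_inc_aux lam (L / b) (L / a) ts hlam htsp h1 h2 hs
  -- strict monotone on [m₀, ∞)
  have hmono : StrictMonoOn E (Set.Ici m₀) := by
    intro a ha b hb hab
    simp only [Set.mem_Ici] at ha hb
    have ha0 : 0 < a := lt_of_lt_of_le hm₀p ha
    have hb0 : 0 < b := lt_of_lt_of_le hm₀p hb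
    rw [hE a ha0, hE b hb0]
    have h1 : (0:ℝ) < L / b := by positivity
    have h2 : L / b < L / a := div_lt_div_of_pos_left hL ha0 hab
    have h3 : L / a ≤ ts := by
      rw [div_le_iff₀ ha0]
      have := (div_le_iff₀ htsp).mp ha
      linarith [this]
    exact F_dec_aux lam (L / b) (L / a) ts hlam h1 h2 h3 hs
  have hE12 : E 1 = E 2 := hiff.mpr hcrit
  refine ⟨⟨m₀, ⟨hm₀1, hm₀2⟩, hanti, hmono⟩, hE12, fun m hm => ?_⟩
  have hm3 : (3:ℝ) ≤ (m:ℝ) := by exact_mod_cast hm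
  rw [hE12]
  exact hmono (by simp only [Set.mem_Ici]; linarith) (by simp only [Set.mem_Ici]; linarith)
    (by linarith)
end

section
/- Let K:[0,∞)→[0,∞) be non-decreasing with K(0)=0, let M>0 and C_M>0 satisfy K(ρ₁)+K(ρ₂) ≥ K(ρ₁+ρ₂)+C_M ρ₁ρ₂ for all ρ₁,ρ₂ ≥ 0 with ρ₁+ρ₂ ≤ M. Let α<β, let g:[α,β]→ℝ be continuous and non-decreasing with ρ := g(β)−g(α) ≤ M, let λ>0 and assume C_* := C_M − λ(β−α)/2 > 0. Let γ ∈ [α,β] satisfy g(γ) = (g(α)+g(β))/2 and define U₀ = g(α) on [α,γ), U₀ = g(β) on [γ,β]. Let v be a non-decreasing piecewise constant function on [α,β] with jump points α < z₁ < ⋯ < z_n < β and jump sizes ρ_i > 0 (1 ≤ i ≤ n), equal to g(α) on [α,z₁) and to g(β) on [z_n,β] (so that ∑_{i=1}^n ρ_i = ρ). Then ∑_{i=1}^n K(ρ_i) + (λ/2)∫_α^β (v−g)² dx ≥ K(ρ) + (λ/2)∫_α^β (U₀−g)² dx + C_* ∑_{1≤i<j≤n} ρ_i ρ_j. -/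
open intervalIntegral

private lemma dsum_succ (ρ : ℕ → ℝ) (n : ℕ) :
    ∑ i ∈ Finset.Icc 1 (n+1), ∑ j ∈ Finset.Icc (i+1) (n+1), ρ i * ρ j
      = (∑ i ∈ Finset.Icc 1 n, ∑ j ∈ Finset.Icc (i+1) n, ρ i * ρ j)
        + (∑ i ∈ Finset.Icc 1 n, ρ i) * ρ (n+1) := by
  rw [Finset.sum_Icc_succ_top (by omega : 1 ≤ n+1)]
  have h2 : Finset.Icc (n+1+1) (n+1) = ∅ := by
    apply Finset.Icc_eq_empty; omega
  rw [h2]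
  simp only [Finset.sum_empty, add_zero]
  rw [Finset.sum_mul, ← Finset.sum_add_distrib]
  refine Finset.sum_congr rfl fun i hi => ?_
  have hi' : i + 1 ≤ n + 1 := by
    simp only [Finset.mem_Icc] at hi; omega
  rw [Finset.sum_Icc_succ_top hi']

private lemma double_id (ρ : ℕ → ℝ) :
    ∀ n : ℕ, 2 * (∑ i ∈ Finset.Icc 1 n, ∑ j ∈ Finset.Icc (i+1) n, ρ i * ρ j)
      = (∑ i ∈ Finset.Icc 1 n, ρ i)^2 - ∑ i ∈ Finset.Icc 1 n, (ρ i)^2 := by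
  intro n
  induction n with
  | zero => simp
  | succ n ih =>
    rw [dsum_succ, Finset.sum_Icc_succ_top (by omega : 1 ≤ n+1) ρ,
        Finset.sum_Icc_succ_top (by omega : 1 ≤ n+1) (fun i => (ρ i)^2)]
    linear_combination ih

private lemma K_superadd (K : ℝ → ℝ) (hK0 : K 0 = 0) (M C : ℝ)
    (hK2 : ∀ ρ₁ ρ₂ : ℝ, 0 ≤ ρ₁ → 0 ≤ ρ₂ → ρ₁ + ρ₂ ≤ M →
      K (ρ₁ + ρ₂) + C * ρ₁ * ρ₂ ≤ K ρ₁ + K ρ₂)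
    (ρ : ℕ → ℝ) :
    ∀ n : ℕ, (∀ i, 1 ≤ i → i ≤ n → 0 ≤ ρ i) →
      (∑ i ∈ Finset.Icc 1 n, ρ i) ≤ M →
      K (∑ i ∈ Finset.Icc 1 n, ρ i)
        + C * ∑ i ∈ Finset.Icc 1 n, ∑ j ∈ Finset.Icc (i+1) n, ρ i * ρ j
        ≤ ∑ i ∈ Finset.Icc 1 n, K (ρ i) := by
  intro n
  induction n with
  | zero => intro _ _; simp [hK0]
  | succ n ih =>
    intro hnn hsum
    have hS : ∑ i ∈ Finset.Icc 1 (n+1), ρ i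
        = (∑ i ∈ Finset.Icc 1 n, ρ i) + ρ (n+1) :=
      Finset.sum_Icc_succ_top (by omega) _
    have hKS : ∑ i ∈ Finset.Icc 1 (n+1), K (ρ i)
        = (∑ i ∈ Finset.Icc 1 n, K (ρ i)) + K (ρ (n+1)) :=
      Finset.sum_Icc_succ_top (by omega) _
    have hρn : 0 ≤ ρ (n+1) := hnn _ (by omega) (le_refl _)
    have hSn : 0 ≤ ∑ i ∈ Finset.Icc 1 n, ρ i := by
      refine Finset.sum_nonneg fun i hi => ?_
      simp only [Finset.mem_Icc] at hi
      exact hnn i hi.1 (by omega)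
    have hsM : (∑ i ∈ Finset.Icc 1 n, ρ i) + ρ (n+1) ≤ M := by rw [← hS]; exact hsum
    have h2 := hK2 _ _ hSn hρn hsM
    have hIH := ih (fun i h1 h2' => hnn i h1 (by omega)) (by linarith)
    rw [hS, hKS, dsum_succ]
    nlinarith [h2, hIH]

private lemma subset_prod_le (ρ : ℕ → ℝ) (n : ℕ)
    (hnn : ∀ i ∈ Finset.Icc 1 n, 0 ≤ ρ i)
    (S : Finset ℕ) (hS : S ⊆ Finset.Icc 1 n) :
    (∑ i ∈ S, ρ i) * ((∑ i ∈ Finset.Icc 1 n, ρ i) - ∑ i ∈ S, ρ i)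
      ≤ ∑ i ∈ Finset.Icc 1 n, ∑ j ∈ Finset.Icc (i+1) n, ρ i * ρ j := by
  have hid := double_id ρ n
  have hsplit : (∑ i ∈ Finset.Icc 1 n \ S, ρ i) + ∑ i ∈ S, ρ i
      = ∑ i ∈ Finset.Icc 1 n, ρ i := Finset.sum_sdiff hS
  have hq : (∑ i ∈ Finset.Icc 1 n \ S, (ρ i)^2) + ∑ i ∈ S, (ρ i)^2
      = ∑ i ∈ Finset.Icc 1 n, (ρ i)^2 := Finset.sum_sdiff hS
  have h1 : ∑ i ∈ S, (ρ i)^2 ≤ (∑ i ∈ S, ρ i)^2 :=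
    Finset.sum_sq_le_sq_sum_of_nonneg fun i hi => hnn i (hS hi)
  have h2 : ∑ i ∈ Finset.Icc 1 n \ S, (ρ i)^2 ≤ (∑ i ∈ Finset.Icc 1 n \ S, ρ i)^2 :=
    Finset.sum_sq_le_sq_sum_of_nonneg fun i hi => hnn i (Finset.sdiff_subset hi)
  rw [← hsplit, ← hq] at hid
  rw [← hsplit]
  nlinarith [h1, h2, hid]

private lemma II_of_bdd {f : ℝ → ℝ} {a b : ℝ} (hab : a ≤ b) (B : ℝ)
    (hm : MeasureTheory.AEStronglyMeasurable f
      (MeasureTheory.volume.restrict (Set.Ioc a b)))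
    (hB : ∀ x ∈ Set.Ioc a b, |f x| ≤ B) :
    IntervalIntegrable f MeasureTheory.volume a b := by
  rw [intervalIntegrable_iff_integrableOn_Ioc_of_le hab]
  refine ⟨hm, MeasureTheory.HasFiniteIntegral.restrict_of_bounded (C := B)
    measure_Ioc_lt_top ?_⟩
  refine (MeasureTheory.ae_restrict_iff' measurableSet_Ioc).2
    (Filter.Eventually.of_forall fun x hx => ?_)
  simpa [Real.norm_eq_abs] using hB x hx

/-- Lemma 4.1 (quantitative form): under (K1) and (K2) with constant `C = C_M`, for
continuous non-decreasing `g` on `[α,β]` with `ρ = g(β)-g(α) ≤ M`,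
`C_* = C_M - λ(β-α)/2 > 0`, `U₀` the one-jump step function jumping where
`g` attains the midpoint value, and `v` a non-decreasing step function with jump
points `α < z₁ < ⋯ < z_n < β`, jump sizes `ρᵢ > 0` and `∑ ρᵢ = ρ`, equal to `g(α)`
before the first jump, we have
`TV_{Kg}(v) ≥ TV_{Kg}(U₀) + C_* ∑_{i<j} ρᵢ ρⱼ`. -/
theorem step_energy_lower_bound (K : ℝ → ℝ)
    (hKnn : ∀ x, 0 ≤ x → 0 ≤ K x) (hK0 : K 0 = 0)
    (hKmono : ∀ x y, 0 ≤ x → x ≤ y → K x ≤ K y)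
    (M C lam : ℝ) (hM : 0 < M) (hC : 0 < C) (hlam : 0 < lam)
    (hK2 : ∀ ρ₁ ρ₂ : ℝ, 0 ≤ ρ₁ → 0 ≤ ρ₂ → ρ₁ + ρ₂ ≤ M →
      K (ρ₁ + ρ₂) + C * ρ₁ * ρ₂ ≤ K ρ₁ + K ρ₂)
    (α β : ℝ) (hab : α < β) (g : ℝ → ℝ)
    (hgc : ContinuousOn g (Set.Icc α β)) (hgm : MonotoneOn g (Set.Icc α β))
    (hρM : g β - g α ≤ M)
    (hCstar : 0 < C - lam * (β - α) / 2)
    (γ : ℝ) (hγ : γ ∈ Set.Icc α β) (hγmid : g γ = (g α + g β) / 2)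
    (n : ℕ) (hn : 1 ≤ n) (z ρ : ℕ → ℝ)
    (hz : ∀ i j, 1 ≤ i → i < j → j ≤ n → z i < z j)
    (hz1 : α < z 1) (hzn : z n < β)
    (hρpos : ∀ i, 1 ≤ i → i ≤ n → 0 < ρ i)
    (hρsum : ∑ i ∈ Finset.Icc 1 n, ρ i = g β - g α) :
    K (g β - g α) +
        (lam / 2) * (∫ x in α..β, ((if x < γ then g α else g β) - g x) ^ 2) +
        (C - lam * (β - α) / 2) *
          ∑ i ∈ Finset.Icc 1 n, ∑ j ∈ Finset.Icc (i + 1) n, ρ i * ρ j ≤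
      (∑ i ∈ Finset.Icc 1 n, K (ρ i)) +
        (lam / 2) * ∫ x in α..β,
          ((g α + ∑ i ∈ Finset.Icc 1 n, if z i ≤ x then ρ i else 0) - g x) ^ 2 := by
  have hαm : α ∈ Set.Icc α β := ⟨le_refl _, hab.le⟩
  have hβm : β ∈ Set.Icc α β := ⟨hab.le, le_refl _⟩
  have hρnn : ∀ i ∈ Finset.Icc 1 n, 0 ≤ ρ i := fun i hi => by
    simp only [Finset.mem_Icc] at hi; exact (hρpos i hi.1 hi.2).le
  set P : ℝ := ∑ i ∈ Finset.Icc 1 n, ∑ j ∈ Finset.Icc (i + 1) n, ρ i * ρ j with hP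
  have hρtot : 0 ≤ g β - g α := by
    have := hgm hαm hβm hab.le; linarith
  have hPnn : 0 ≤ P := by
    rw [hP]
    refine Finset.sum_nonneg fun i hi => Finset.sum_nonneg fun j hj => ?_
    simp only [Finset.mem_Icc] at hi hj
    exact mul_nonneg ((hρpos i hi.1 hi.2).le) ((hρpos j (by omega) hj.2).le)
  -- facts about the partial sums
  have hs_nonneg : ∀ x : ℝ, 0 ≤ ∑ i ∈ Finset.Icc 1 n, if z i ≤ x then ρ i else 0 := by
    intro x
    refine Finset.sum_nonneg fun i hi => ?_
    split_ifs
    · exact hρnn i hi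
    · exact le_refl 0
  have hs_le : ∀ x : ℝ,
      (∑ i ∈ Finset.Icc 1 n, if z i ≤ x then ρ i else 0) ≤ g β - g α := by
    intro x
    rw [← hρsum]
    refine Finset.sum_le_sum fun i hi => ?_
    split_ifs
    · exact le_refl _
    · exact hρnn i hi
  have hsP : ∀ x : ℝ,
      (∑ i ∈ Finset.Icc 1 n, if z i ≤ x then ρ i else 0) *
        ((g β - g α) - ∑ i ∈ Finset.Icc 1 n, if z i ≤ x then ρ i else 0) ≤ P := by
    intro x
    have h := subset_prod_le ρ n hρnn
      ((Finset.Icc 1 n).filter (fun i => z i ≤ x)) (Finset.filter_subset _ _)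
    rw [Finset.sum_filter, hρsum, ← hP] at h
    exact h
  -- bound for g
  obtain ⟨Cg, hCg⟩ := isCompact_Icc.exists_bound_of_continuousOn hgc
  have hCg' : ∀ x ∈ Set.Icc α β, |g x| ≤ Cg := fun x hx => by
    simpa [Real.norm_eq_abs] using hCg x hx
  -- measurability
  have hgAE : MeasureTheory.AEStronglyMeasurable g
      (MeasureTheory.volume.restrict (Set.Ioc α β)) :=
    (hgc.mono Set.Ioc_subset_Icc_self).aestronglyMeasurable measurableSet_Ioc
  have hhm : Measurable (fun x : ℝ => if x < γ then g α else g β) :=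
    Measurable.ite measurableSet_Iio measurable_const measurable_const
  have hvm : Measurable (fun x : ℝ =>
      g α + ∑ i ∈ Finset.Icc 1 n, if z i ≤ x then ρ i else 0) :=
    measurable_const.add (Finset.measurable_sum _ fun i _ =>
      Measurable.ite measurableSet_Ici measurable_const measurable_const)
  -- integrability of both integrands
  have int1 : IntervalIntegrable
      (fun x => ((if x < γ then g α else g β) - g x) ^ 2)
      MeasureTheory.volume α β := by
    refine II_of_bdd hab.le ((|g α| + |g β| + Cg) ^ 2) ?_ ?_
    · have hsub := (hhm.aestronglyMeasurable.restrict).sub hgAE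
      simp only [pow_two]
      exact hsub.mul hsub
    · intro x hx
      have hgx := hCg' x (Set.Ioc_subset_Icc_self hx)
      rw [abs_pow]
      refine pow_le_pow_left₀ (abs_nonneg _) ?_ 2
      have t := abs_add_le (if x < γ then g α else g β) (-(g x))
      rw [abs_neg, ← sub_eq_add_neg] at t
      have h0 : |if x < γ then g α else g β| ≤ |g α| + |g β| := by
        split_ifs
        · linarith [abs_nonneg (g β)]
        · linarith [abs_nonneg (g α)]
      linarith
  have int2 : IntervalIntegrable
      (fun x => ((g α + ∑ i ∈ Finset.Icc 1 n, if z i ≤ x then ρ i else 0) - g x) ^ 2)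
      MeasureTheory.volume α β := by
    refine II_of_bdd hab.le ((|g α| + (g β - g α) + Cg) ^ 2) ?_ ?_
    · have hsub := (hvm.aestronglyMeasurable.restrict).sub hgAE
      simp only [pow_two]
      exact hsub.mul hsub
    · intro x hx
      have hgx := (abs_le.1 (hCg' x (Set.Ioc_subset_Icc_self hx)))
      have h1 := hs_nonneg x
      have h2 := hs_le x
      rw [abs_pow]
      refine pow_le_pow_left₀ (abs_nonneg _) ?_ 2
      refine abs_le.2 ⟨?_, ?_⟩
      · have := neg_abs_le (g α); linarith
      · have := le_abs_self (g α); linarith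
  -- pointwise comparison
  have hpt : ∀ x ∈ Set.Icc α β,
      ((if x < γ then g α else g β) - g x) ^ 2 ≤
        ((g α + ∑ i ∈ Finset.Icc 1 n, if z i ≤ x then ρ i else 0) - g x) ^ 2 + P := by
    intro x hx
    have h1 := hs_nonneg x
    have h2 := hs_le x
    have h3 := hsP x
    by_cases hxγ : x < γ
    · rw [if_pos hxγ]
      have hga : g α ≤ g x := hgm hαm hx hx.1
      have hmid : g x ≤ (g α + g β) / 2 := by
        rw [← hγmid]; exact hgm hx hγ hxγ.le
      nlinarith [h3, mul_nonneg h1 (by linarith :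
        0 ≤ (g β - g α) - 2 * (g x - g α))]
    · rw [if_neg hxγ]
      push_neg at hxγ
      have hgb : g x ≤ g β := hgm hx hβm hx.2
      have hmid : (g α + g β) / 2 ≤ g x := by
        rw [← hγmid]; exact hgm hγ hx hxγ
      nlinarith [h3, mul_nonneg (by linarith :
        0 ≤ (g β - g α) - ∑ i ∈ Finset.Icc 1 n, if z i ≤ x then ρ i else 0)
        (by linarith : 0 ≤ (g β - g α) - 2 * (g β - g x))]
  -- integral comparison
  have hI : (∫ x in α..β, ((if x < γ then g α else g β) - g x) ^ 2)
      ≤ (∫ x in α..β,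
          ((g α + ∑ i ∈ Finset.Icc 1 n, if z i ≤ x then ρ i else 0) - g x) ^ 2)
        + (β - α) * P := by
    have hmono := intervalIntegral.integral_mono_on hab.le int1
      (int2.add intervalIntegrable_const) hpt
    rwa [intervalIntegral.integral_add int2 intervalIntegrable_const,
      intervalIntegral.integral_const, smul_eq_mul] at hmono
  -- K superadditivity
  have hA := K_superadd K hK0 M C hK2 ρ n
    (fun i hi1 hi2 => (hρpos i hi1 hi2).le) (by rw [hρsum]; exact hρM)
  rw [hρsum, ← hP] at hA
  have hI2 := mul_le_mul_of_nonneg_left hI (by positivity : (0:ℝ) ≤ lam / 2)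
  nlinarith [hA, hI2, hPnn]
end

section
/- Let K:[0,∞)→[0,∞) satisfy K(0)=0 and lim_{ρ→0+} K(ρ)/ρ = 1. Let a<b and let u:[a,b]→ℝ be continuous with finite total variation V on [a,b]. Then for every ε>0 there exist an integer n ≥ 1, points a = x₀ < x₁ < ⋯ < x_n = b and values c₁,…,c_n ∈ ℝ with c₁ = u(a) and c_n = u(b), such that the piecewise constant function w defined by w = c_i on [x_{i−1},x_i) for i < n and w = c_n on [x_{n−1},b] satisfies sup_{[a,b]} |w − u| < ε and |∑_{i=1}^{n−1} K(|c_{i+1} − c_i|) − V| < ε. -/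
lemma abs_sub_le_chain (f : ℕ → ℝ) {p q : ℕ} (h : p ≤ q) :
    |f q - f p| ≤ ∑ i ∈ Finset.Ico p q, |f (i + 1) - f i| := by
  induction q, h using Nat.le_induction with
  | base => simp
  | succ q hpq ih =>
    rw [Finset.sum_Ico_succ_top hpq]
    have h2 := abs_sub_le (f (q+1)) (f q) (f p)
    have h4 := abs_sub_comm (f (q+1)) (f q)
    linarith

lemma chain_sum (f : ℕ → ℝ) (σ : ℕ → ℕ) (hσ : Monotone σ) (m : ℕ) :
    ∑ j ∈ Finset.range m, |f (σ (j + 1)) - f (σ j)| ≤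
      ∑ i ∈ Finset.Ico (σ 0) (σ m), |f (i + 1) - f i| := by
  induction m with
  | zero => simp
  | succ m ih =>
    rw [Finset.sum_range_succ,
      ← Finset.sum_Ico_consecutive (fun i => |f (i+1) - f i|) (hσ (Nat.zero_le m))
        (hσ (Nat.le_succ m))]
    exact add_le_add ih (abs_sub_le_chain f (hσ (Nat.le_succ m)))

lemma enum_finset (F : Finset ℝ) (hFne : F.Nonempty) :
    ∃ (n : ℕ) (x : ℕ → ℝ), n + 1 = F.card ∧ Monotone x ∧ (∀ i, x i ∈ F) ∧
      (∀ i j, i < j → j ≤ n → x i < x j) ∧ (∀ z ∈ F, ∃ j ≤ n, x j = z) := by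
  set n : ℕ := F.card - 1 with hn
  have hcard : F.card = n + 1 := by
    have := Finset.card_pos.2 hFne; omega
  set e := F.orderIsoOfFin hcard with he
  refine ⟨n, fun i => (e ⟨min i n, by omega⟩ : ℝ), hcard.symm, ?_, ?_, ?_, ?_⟩
  · intro i j hij
    exact e.monotone (by simp [Fin.le_def]; omega)
  · exact fun i => (e ⟨min i n, by omega⟩).2
  · intro i j hij hjn
    exact e.strictMono (by simp [Fin.lt_def]; omega)
  · intro z hz
    refine ⟨(e.symm ⟨z, hz⟩).val, by omega, ?_⟩
    have h1 : min ((e.symm ⟨z, hz⟩).val) n = (e.symm ⟨z, hz⟩).val := by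
      have := (e.symm ⟨z, hz⟩).isLt; omega
    simp only [h1]
    have h2 : (⟨(e.symm ⟨z, hz⟩).val, by omega⟩ : Fin (n+1)) = e.symm ⟨z, hz⟩ := by
      ext; rfl
    rw [h2, OrderIso.apply_symm_apply]

set_option maxHeartbeats 4000000 in
/-- Approximation of a continuous function of finite total variation `V` by piecewise
constant functions (Lemma 2.3): for every `ε > 0` there is a piecewise constant
function `w` (values `cᵢ` on `[x_{i-1}, xᵢ)`, with `c₁ = u(a)`, `c_n = u(b)`) that is
uniformly `ε`-close to `u` and whose generalized total variation
`∑ K(|c_{i+1} - cᵢ|)` is `ε`-close to `V`. -/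
theorem piecewise_constant_approx (K : ℝ → ℝ)
    (hKnn : ∀ ρ, 0 ≤ ρ → 0 ≤ K ρ) (hK0 : K 0 = 0)
    (hK3 : Filter.Tendsto (fun ρ => K ρ / ρ) (nhdsWithin 0 (Set.Ioi 0)) (nhds 1))
    (a b : ℝ) (hab : a < b) (u : ℝ → ℝ) (hu : ContinuousOn u (Set.Icc a b))
    (V : ℝ) (hV0 : 0 ≤ V)
    (hV : eVariationOn u (Set.Icc a b) = ENNReal.ofReal V) :
    ∀ ε > (0 : ℝ), ∃ (n : ℕ) (x c : ℕ → ℝ), 1 ≤ n ∧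
      x 0 = a ∧ x n = b ∧ (∀ i < n, x i < x (i + 1)) ∧
      c 1 = u a ∧ c n = u b ∧
      (∀ i, 1 ≤ i → i < n → ∀ y ∈ Set.Ico (x (i - 1)) (x i), |c i - u y| < ε) ∧
      (∀ y ∈ Set.Icc (x (n - 1)) b, |c n - u y| < ε) ∧
      |(∑ i ∈ Finset.Ico 1 n, K |c (i + 1) - c i|) - V| < ε := by
  intro ε hε
  -- constant for the K-estimate
  set δK : ℝ := ε / (4 * (V + 1)) with hδK
  have hδKpos : 0 < δK := by positivity
  clear_value δK
  obtain ⟨r, hr0, hr⟩ := (Metric.tendsto_nhdsWithin_nhds).1 hK3 δK hδKpos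
  have hKest : ∀ ρ, 0 ≤ ρ → ρ < r → |K ρ - ρ| ≤ δK * ρ := by
    intro ρ hρ0 hρr
    rcases eq_or_lt_of_le hρ0 with h | h
    · simp [← h, hK0]
    · have h1 := hr (Set.mem_Ioi.2 h) (by rwa [Real.dist_eq, sub_zero, abs_of_pos h])
      rw [Real.dist_eq] at h1
      have h2 : |K ρ / ρ - 1| * ρ < δK * ρ := mul_lt_mul_of_pos_right h1 h
      have h3 : |K ρ - ρ| = |K ρ / ρ - 1| * ρ := by
        have h4 : K ρ - ρ = (K ρ / ρ - 1) * ρ := by field_simp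
        rw [h4, abs_mul, abs_of_pos h]
      rw [h3]; exact h2.le
  -- target oscillation size
  set η : ℝ := min (min ε (ε/8)) (r/2) with hηdef
  have hη0 : 0 < η := lt_min (lt_min hε (by linarith)) (by linarith)
  have hηε : η ≤ ε := le_trans (min_le_left _ _) (min_le_left _ _)
  have hη8 : η ≤ ε/8 := le_trans (min_le_left _ _) (min_le_right _ _)
  have hηr : η ≤ r/2 := min_le_right _ _
  clear_value η
  -- uniform continuity
  have hucmp : UniformContinuousOn u (Set.Icc a b) :=
    isCompact_Icc.uniformContinuousOn_of_continuous hu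
  obtain ⟨δ, hδ0, hδ⟩ := Metric.uniformContinuousOn_iff.1 hucmp η hη0
  -- coarse partition with sum close to V
  have hcoarse : ∃ (m : ℕ) (t : ℕ → ℝ), Monotone t ∧ (∀ j, t j ∈ Set.Icc a b) ∧
      V - ε/4 < ∑ j ∈ Finset.range m, |u (t (j + 1)) - u (t j)| := by
    rcases lt_or_ge (V - ε/4) 0 with h | h
    · exact ⟨0, fun _ => a, monotone_const, fun _ => ⟨le_refl a, hab.le⟩, by simpa using h⟩
    · have hVpos : 0 < V := by linarith
      have h1 : ENNReal.ofReal (V - ε/4) < eVariationOn u (Set.Icc a b) := by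
        rw [hV]
        exact (ENNReal.ofReal_lt_ofReal_iff hVpos).2 (by linarith)
      rw [eVariationOn, lt_iSup_iff] at h1
      obtain ⟨⟨m, t, ht, hts⟩, hlt⟩ := h1
      refine ⟨m, t, ht, hts, ?_⟩
      have heq : ∑ j ∈ Finset.range m, edist (u (t (j + 1))) (u (t j)) =
          ENNReal.ofReal (∑ j ∈ Finset.range m, |u (t (j + 1)) - u (t j)|) := by
        rw [ENNReal.ofReal_sum_of_nonneg (fun i _ => abs_nonneg _)]
        refine Finset.sum_congr rfl fun i _ => ?_
        rw [edist_dist, Real.dist_eq]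
      rw [heq] at hlt
      exact (ENNReal.ofReal_lt_ofReal_iff_of_nonneg h).1 hlt
  obtain ⟨m, t, ht, hts, htsum⟩ := hcoarse
  -- grid
  obtain ⟨M₀, hM₀⟩ := exists_nat_gt ((b - a)/δ)
  set M : ℕ := max M₀ 2 with hMdef
  have hM2 : 2 ≤ M := le_max_right _ _
  have hM₀M : (b - a)/δ < M := by
    have h0 : (M₀:ℝ) ≤ M := by exact_mod_cast le_max_left M₀ 2
    linarith
  clear_value M
  have hM2' : (2:ℝ) ≤ M := by exact_mod_cast hM2
  have hMpos : (0:ℝ) < M := by linarith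
  set s : ℝ := (b - a)/M with hsdef
  have hs0 : 0 < s := div_pos (by linarith) hMpos
  have hsδ : s < δ := by
    rw [hsdef, div_lt_iff₀ hMpos]
    calc b - a = ((b-a)/δ) * δ := by field_simp
    _ < M * δ := mul_lt_mul_of_pos_right hM₀M hδ0
    _ = δ * M := by ring
  have hsba : s < b - a := by
    rw [hsdef, div_lt_iff₀ hMpos]
    nlinarith
  have hMb : a + (M:ℝ) * s = b := by rw [hsdef]; field_simp; ring
  clear_value s
  set g : ℕ → ℝ := fun k => a + k * s with hgdef
  clear_value g
  -- combined finset
  set F : Finset ℝ :=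
    ((Finset.range (m+1)).image t) ∪ ((Finset.range (M+1)).image g) with hFdef
  clear_value F
  have hgF : ∀ k, k ≤ M → g k ∈ F := by
    intro k hk
    rw [hFdef]
    exact Finset.mem_union_right _ (Finset.mem_image.2 ⟨k, Finset.mem_range.2 (by omega), rfl⟩)
  have htF : ∀ j, j ≤ m → t j ∈ F := by
    intro j hj
    rw [hFdef]
    exact Finset.mem_union_left _ (Finset.mem_image.2 ⟨j, Finset.mem_range.2 (by omega), rfl⟩)
  have haF : a ∈ F := by
    have h0 : g 0 = a := by rw [hgdef]; simp
    have := hgF 0 (by omega); rwa [h0] at this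
  have hbF : b ∈ F := by
    have hM' : g M = b := by rw [hgdef]; simp only []; exact_mod_cast hMb
    have := hgF M (le_refl M); rwa [hM'] at this
  have hFab : ∀ z ∈ F, z ∈ Set.Icc a b := by
    intro z hz
    rw [hFdef] at hz
    rcases Finset.mem_union.1 hz with h | h
    · obtain ⟨j, _, rfl⟩ := Finset.mem_image.1 h
      exact hts j
    · obtain ⟨k, hk, rfl⟩ := Finset.mem_image.1 h
      rw [Finset.mem_range] at hk
      have hkM : (k:ℝ) ≤ M := by exact_mod_cast (by omega : k ≤ M)
      constructor
      · have : (0:ℝ) ≤ k * s := by positivity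
        simp only [hgdef]; linarith
      · have : (k:ℝ) * s ≤ M * s := mul_le_mul_of_nonneg_right hkM hs0.le
        simp only [hgdef]; linarith
  -- enumeration
  obtain ⟨n, x, hncard, hxmono, hxF, hxs, hexists⟩ := enum_finset F ⟨a, haF⟩
  have hx0 : x 0 = a := by
    obtain ⟨j, hj, hxj⟩ := hexists a haF
    have h1 : x 0 ≤ x j := hxmono (Nat.zero_le j)
    have h2 : a ≤ x 0 := (hFab _ (hxF 0)).1
    rw [hxj] at h1; linarith
  have hxn : x n = b := by
    obtain ⟨j, hj, hxj⟩ := hexists b hbF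
    have h1 : x j ≤ x n := hxmono hj
    have h2 : x n ≤ b := (hFab _ (hxF n)).2
    rw [hxj] at h1; linarith
  have hnocross : ∀ i < n, ∀ z ∈ F, ¬(x i < z ∧ z < x (i + 1)) := by
    intro i hi z hz hcon
    obtain ⟨h1, h2⟩ := hcon
    obtain ⟨j, hj, hxj⟩ := hexists z hz
    rw [← hxj] at h1 h2
    have hij : i < j := by
      by_contra hc
      exact absurd (hxmono (not_lt.1 hc)) (not_le.2 h1)
    have hji : j < i + 1 := by
      by_contra hc
      exact absurd (hxmono (not_lt.1 hc)) (not_le.2 h2)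
    omega
  -- mesh bound
  have hmesh : ∀ i < n, x (i + 1) - x i ≤ s := by
    intro i hi
    by_contra hc
    push_neg at hc
    have hxia : 0 ≤ x i - a := by have := (hFab _ (hxF i)).1; linarith
    obtain ⟨q, hq0, h3⟩ : ∃ q : ℝ, 0 ≤ q ∧ q * s = x i - a :=
      ⟨(x i - a)/s, div_nonneg hxia hs0.le, by field_simp⟩
    have hfl : (0:ℤ) ≤ ⌊q⌋ := Int.floor_nonneg.2 hq0
    obtain ⟨k, hkr⟩ : ∃ k : ℕ, (k:ℝ) = (⌊q⌋:ℝ) + 1 :=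
      ⟨⌊q⌋.toNat + 1, by exact_mod_cast congrArg (fun z : ℤ => (z:ℝ) + 1) (Int.toNat_of_nonneg hfl)⟩
    have hk1 : x i < g k := by
      have h1 : q < (⌊q⌋:ℝ) + 1 := Int.lt_floor_add_one q
      have h2 : q * s < ((⌊q⌋:ℝ) + 1) * s := mul_lt_mul_of_pos_right h1 hs0
      simp only [hgdef]
      rw [hkr]; linarith
    have hk2 : g k < x (i + 1) := by
      have h1 : (⌊q⌋:ℝ) + 1 ≤ q + 1 := by linarith [Int.floor_le q]
      have h2 : ((⌊q⌋:ℝ) + 1) * s ≤ (q + 1) * s := mul_le_mul_of_nonneg_right h1 hs0.le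
      simp only [hgdef]
      rw [hkr]; linarith
    have hkM : k ≤ M := by
      have hxib : x (i+1) ≤ b := (hFab _ (hxF (i+1))).2
      have h1 : a + (k:ℝ) * s < a + (M:ℝ) * s := by
        simp only [hgdef] at hk2
        linarith
      have h2 : (k:ℝ) < M := by
        have h4 : (k:ℝ) * s < (M:ℝ) * s := by linarith
        exact lt_of_mul_lt_mul_right h4 hs0.le
      exact_mod_cast h2.le
    exact hnocross i hi (g k) (hgF k hkM) ⟨hk1, hk2⟩
  -- n ≥ 2
  have hn2 : 2 ≤ n := by
    have hg1 : g 1 ∈ F := hgF 1 (by omega)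
    have hag1 : a < g 1 := by simp only [hgdef]; push_cast; linarith
    have hg1b : g 1 < b := by simp only [hgdef]; push_cast; linarith
    obtain ⟨j, hj, hxj⟩ := hexists (g 1) hg1
    by_contra hcon
    push_neg at hcon
    have : j = 0 ∨ j = n := by omega
    rcases this with h | h
    · rw [h, hx0] at hxj; linarith
    · rw [h, hxn] at hxj; linarith
  -- increments small
  have hinc : ∀ i < n, |u (x (i + 1)) - u (x i)| < η := by
    intro i hi
    have h0 : x i ≤ x (i+1) := hxmono (Nat.le_succ i)
    have h1 : dist (x (i+1)) (x i) < δ := by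
      rw [Real.dist_eq, abs_of_nonneg (by linarith : (0:ℝ) ≤ x (i+1) - x i)]
      linarith [hmesh i hi]
    have := hδ (x (i+1)) (hFab _ (hxF (i+1))) (x i) (hFab _ (hxF i)) h1
    rwa [Real.dist_eq] at this
  -- sigma: indices of coarse points, derived from hexists
  have hσex : ∀ j, ∃ k ≤ n, x k = t (min j m) := fun j => hexists _ (htF _ (by omega))
  choose σ hσn hxσ using hσex
  have hσmono : Monotone σ := by
    intro i j hij
    by_contra hcon
    push_neg at hcon
    have h1 : x (σ j) < x (σ i) := hxs _ _ hcon (hσn i)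
    rw [hxσ, hxσ] at h1
    exact absurd (ht (by omega : min i m ≤ min j m)) (not_le.2 h1)
  -- fine sum dominates coarse sum
  have hcf' : V - ε/4 < ∑ i ∈ Finset.range n, |u (x (i + 1)) - u (x i)| := by
    have h1 : ∑ j ∈ Finset.range m, |u (t (j + 1)) - u (t j)| =
        ∑ j ∈ Finset.range m, |(u ∘ x) (σ (j + 1)) - (u ∘ x) (σ j)| := by
      refine Finset.sum_congr rfl fun j hj => ?_
      rw [Finset.mem_range] at hj
      have e1 : min (j+1) m = j + 1 := by omega
      have e2 : min j m = j := by omega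
      simp only [Function.comp, hxσ, e1, e2]
    have h2 : ∑ j ∈ Finset.range m, |(u ∘ x) (σ (j + 1)) - (u ∘ x) (σ j)| ≤
        ∑ i ∈ Finset.range n, |(u ∘ x) (i + 1) - (u ∘ x) i| := by
      refine (chain_sum (u ∘ x) σ hσmono m).trans ?_
      refine Finset.sum_le_sum_of_subset_of_nonneg ?_ (fun i _ _ => abs_nonneg _)
      intro i hi
      rw [Finset.mem_Ico] at hi
      rw [Finset.mem_range]
      have := hσn m
      omega
    have h3 : ∑ i ∈ Finset.range n, |(u ∘ x) (i + 1) - (u ∘ x) i| =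
        ∑ i ∈ Finset.range n, |u (x (i + 1)) - u (x i)| := by
      refine Finset.sum_congr rfl fun i _ => ?_
      simp [Function.comp]
    calc V - ε/4 < ∑ j ∈ Finset.range m, |u (t (j + 1)) - u (t j)| := htsum
    _ = ∑ j ∈ Finset.range m, |(u ∘ x) (σ (j + 1)) - (u ∘ x) (σ j)| := h1
    _ ≤ ∑ i ∈ Finset.range n, |(u ∘ x) (i + 1) - (u ∘ x) i| := h2
    _ = ∑ i ∈ Finset.range n, |u (x (i + 1)) - u (x i)| := h3
  -- fine sum is at most V
  have hSV : ∑ i ∈ Finset.range n, |u (x (i + 1)) - u (x i)| ≤ V := by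
    have h1 := eVariationOn.sum_le (f := u) (n := n) hxmono (fun i => hFab _ (hxF i))
    rw [hV] at h1
    have heq : ∑ i ∈ Finset.range n, edist (u (x (i + 1))) (u (x i)) =
        ENNReal.ofReal (∑ i ∈ Finset.range n, |u (x (i + 1)) - u (x i)|) := by
      rw [ENNReal.ofReal_sum_of_nonneg (fun i _ => abs_nonneg _)]
      refine Finset.sum_congr rfl fun i _ => ?_
      rw [edist_dist, Real.dist_eq]
    rw [heq] at h1
    exact (ENNReal.ofReal_le_ofReal_iff hV0).1 h1
  -- values
  set c : ℕ → ℝ := fun i => if i = n then u b else u (x (i - 1)) with hc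
  clear_value c
  have hn1e : n - 1 + 1 = n := by omega
  have hn2e : n - 2 + 1 = n - 1 := by omega
  have h_incn2 : |u (x (n - 1)) - u (x (n - 2))| < η := by
    have h := hinc (n-2) (by omega); rwa [hn2e] at h
  have h_incn1 : |u (x n) - u (x (n - 1))| < η := by
    have h := hinc (n-1) (by omega); rwa [hn1e] at h
  have hcn' : c n = u (x n) := by simp [hc, hxn]
  have hcn1 : c (n - 1) = u (x (n - 2)) := by
    have hne : ¬(n - 1 = n) := by omega
    have h12 : n - 1 - 1 = n - 2 := by omega
    simp [hc, hne, h12]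
  have hρ1 : ∀ i, 1 ≤ i → i < n - 1 →
      |c (i + 1) - c i| = |u (x (i - 1 + 1)) - u (x (i - 1))| := by
    intro i h1 h2
    have e1 : c (i + 1) = u (x i) := by
      have hne : ¬(i + 1 = n) := by omega
      simp [hc, hne, Nat.add_sub_cancel]
    have e2 : c i = u (x (i - 1)) := by
      have hne : ¬(i = n) := by omega
      simp [hc, hne]
    have e3 : i - 1 + 1 = i := by omega
    rw [e1, e2, e3]
  have hρlast : |c (n - 1 + 1) - c (n - 1)| ≤
      |u (x (n - 1)) - u (x (n - 2))| + |u (x n) - u (x (n - 1))| := by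
    rw [hn1e, hcn', hcn1]
    have h1 := abs_sub_le (u (x n)) (u (x (n-1))) (u (x (n-2)))
    linarith
  have hρlast_lt : |c (n - 1 + 1) - c (n - 1)| < 2 * η := by
    linarith
  have hρsmall : ∀ i ∈ Finset.Ico 1 n, |c (i + 1) - c i| < r := by
    intro i hi
    rw [Finset.mem_Ico] at hi
    rcases lt_or_ge i (n-1) with h | h
    · rw [hρ1 i hi.1 h]
      have := hinc (i - 1) (by omega)
      linarith
    · have hieq : i = n - 1 := by omega
      rw [hieq]
      linarith [hρlast_lt]
  -- sums
  have hS'split : ∑ i ∈ Finset.Ico 1 n, |c (i + 1) - c i| =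
      (∑ j ∈ Finset.range (n - 2), |u (x (j + 1)) - u (x j)|) + |c (n - 1 + 1) - c (n - 1)| := by
    have h1 : (1:ℕ) ≤ n - 1 := by omega
    have h2 := Finset.sum_Ico_succ_top h1 (fun i => |c (i + 1) - c i|)
    rw [hn1e] at h2
    rw [h2]
    congr 1
    rw [Finset.sum_Ico_eq_sum_range]
    have h3 : n - 1 - 1 = n - 2 := by omega
    rw [h3]
    refine Finset.sum_congr rfl fun j hj => ?_
    rw [Finset.mem_range] at hj
    have hj1 : 1 ≤ 1 + j := by omega
    have hj2 : 1 + j < n - 1 := by omega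
    have h4 := hρ1 (1 + j) hj1 hj2
    have e5 : 1 + j - 1 = j := by omega
    rw [h4, e5]
    rw [hn1e]
  have hSsplit : ∑ i ∈ Finset.range n, |u (x (i + 1)) - u (x i)| =
      (∑ j ∈ Finset.range (n - 2), |u (x (j + 1)) - u (x j)|)
        + |u (x (n - 1)) - u (x (n - 2))| + |u (x n) - u (x (n - 1))| := by
    have h1 := Finset.sum_range_succ (fun i => |u (x (i + 1)) - u (x i)|) (n - 1)
    rw [hn1e] at h1
    have h2 := Finset.sum_range_succ (fun i => |u (x (i + 1)) - u (x i)|) (n - 2)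
    rw [hn2e] at h2
    rw [h1, h2]
  have hS'le : ∑ i ∈ Finset.Ico 1 n, |c (i + 1) - c i| ≤
      ∑ i ∈ Finset.range n, |u (x (i + 1)) - u (x i)| := by
    rw [hS'split, hSsplit]
    linarith [hρlast]
  have hS'ge : ∑ i ∈ Finset.Ico 1 n, |c (i + 1) - c i| > V - ε/4 - 2*η := by
    have h1 : |c (n - 1 + 1) - c (n - 1)| ≥ 0 := abs_nonneg _
    rw [hS'split]
    rw [hSsplit] at hcf'
    linarith
  have hS'nn : (0:ℝ) ≤ ∑ i ∈ Finset.Ico 1 n, |c (i + 1) - c i| :=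
    Finset.sum_nonneg fun i _ => abs_nonneg _
  -- K-sum estimate
  have hTS' : abs ((∑ i ∈ Finset.Ico 1 n, K |c (i + 1) - c i|)
      - ∑ i ∈ Finset.Ico 1 n, |c (i + 1) - c i|) ≤
      δK * ∑ i ∈ Finset.Ico 1 n, |c (i + 1) - c i| := by
    rw [← Finset.sum_sub_distrib]
    refine (Finset.abs_sum_le_sum_abs _ _).trans ?_
    rw [Finset.mul_sum]
    exact Finset.sum_le_sum fun i hi => hKest _ (abs_nonneg _) (hρsmall i hi)
  have hδKV : δK * V < ε/4 := by
    have h1 : δK * (V + 1) = ε/4 := by rw [hδK]; field_simp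
    linarith
  -- finish
  refine ⟨n, x, c, by omega, hx0, hxn, fun i hi => hxs i (i+1) (by omega) (by omega),
    ?_, ?_, ?_, ?_, ?_⟩
  · have hne : ¬(1 = n) := by omega
    simp [hc, hne, hx0]
  · simp [hc]
  · -- closeness on [x (i-1), x i)
    intro i h1i hin y hy
    have hci : c i = u (x (i - 1)) := by
      have hne : ¬(i = n) := by omega
      simp [hc, hne]
    rw [hci]
    have hyab : y ∈ Set.Icc a b :=
      ⟨le_trans (hFab _ (hxF (i-1))).1 hy.1, le_trans hy.2.le (hFab _ (hxF i)).2⟩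
    have hm := hmesh (i-1) (by omega)
    have he1 : i - 1 + 1 = i := by omega
    rw [he1] at hm
    have hd : dist (x (i-1)) y < δ := by
      rw [Real.dist_eq, abs_of_nonpos (by linarith [hy.1] : x (i-1) - y ≤ 0)]
      have := hy.2
      linarith
    have := hδ (x (i-1)) (hFab _ (hxF (i-1))) y hyab hd
    rw [Real.dist_eq] at this
    linarith
  · -- closeness on [x (n-1), b]
    intro y hy
    have hcn : c n = u b := by simp [hc]
    rw [hcn]
    have hyab : y ∈ Set.Icc a b := ⟨le_trans (hFab _ (hxF (n-1))).1 hy.1, hy.2⟩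
    have hm := hmesh (n-1) (by omega)
    rw [hn1e, hxn] at hm
    have hd : dist b y < δ := by
      rw [Real.dist_eq, abs_of_nonneg (by linarith [hy.2] : (0:ℝ) ≤ b - y)]
      have := hy.1
      linarith
    have := hδ b ⟨hab.le, le_refl b⟩ y hyab hd
    rw [Real.dist_eq] at this
    linarith
  · -- the variation estimate
    have habs1 : |(∑ i ∈ Finset.Ico 1 n, |c (i + 1) - c i|) - V| < ε/4 + 2*η := by
      rw [abs_lt]
      constructor
      · have := le_trans hS'le hSV
        linarith
      · linarith
    have hδKS' : δK * ∑ i ∈ Finset.Ico 1 n, |c (i + 1) - c i| ≤ δK * V :=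
      mul_le_mul_of_nonneg_left (le_trans hS'le hSV) hδKpos.le
    have htri := abs_sub_le (∑ i ∈ Finset.Ico 1 n, K |c (i + 1) - c i|)
      (∑ i ∈ Finset.Ico 1 n, |c (i + 1) - c i|) V
    have h2η : 2 * η ≤ ε/4 := by linarith
    linarith
end

section
/- Let K:[0,∞)→[0,∞) satisfy K(0)=0 and lim_{ρ→0+} K(ρ)/ρ = 1. Let a<b and let u:[a,b]→ℝ be continuous and non-decreasing. Then for every ε>0 there exist an integer n ≥ 1, points a = x₀ < x₁ < ⋯ < x_n = b and values c₁ ≤ c₂ ≤ ⋯ ≤ c_n with c₁ = u(a) and c_n = u(b), such that the piecewise constant function w defined by w = c_i on [x_{i−1},x_i) for i < n and w = c_n on [x_{n−1},b] satisfies sup_{[a,b]} |w − u| < ε and |∑_{i=1}^{n−1} K(c_{i+1} − c_i) − (u(b) − u(a))| < ε. -/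
private lemma telescope_aux (c : ℕ → ℝ) :
    ∀ n, 1 ≤ n → ∑ i ∈ Finset.Ico 1 n, (c (i + 1) - c i) = c n - c 1 := by
  intro n hn
  induction n with
  | zero => omega
  | succ m ih =>
    rcases Nat.lt_or_ge m 1 with hm | hm
    · interval_cases m
      · simp
    · rw [Finset.sum_Ico_succ_top (by omega), ih hm]
      ring

/-- Monotone version of the piecewise constant approximation (Corollary 2.4):
a continuous non-decreasing `u` on `[a,b]` can be approximated uniformly within `ε`
by a non-decreasing piecewise constant function `w` (values `c₁ ≤ ⋯ ≤ c_n`, with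
`c₁ = u(a)` and `c_n = u(b)`) whose generalized total variation `∑ K(c_{i+1} - cᵢ)`
is `ε`-close to the total variation `u(b) - u(a)`. -/
theorem piecewise_constant_approx_monotone (K : ℝ → ℝ)
    (hKnn : ∀ ρ, 0 ≤ ρ → 0 ≤ K ρ) (hK0 : K 0 = 0)
    (hK3 : Filter.Tendsto (fun ρ => K ρ / ρ) (nhdsWithin 0 (Set.Ioi 0)) (nhds 1))
    (a b : ℝ) (hab : a < b) (u : ℝ → ℝ)
    (hu : ContinuousOn u (Set.Icc a b)) (hum : MonotoneOn u (Set.Icc a b)) :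
    ∀ ε > (0 : ℝ), ∃ (n : ℕ) (x c : ℕ → ℝ), 1 ≤ n ∧
      x 0 = a ∧ x n = b ∧ (∀ i < n, x i < x (i + 1)) ∧
      (∀ i, 1 ≤ i → i < n → c i ≤ c (i + 1)) ∧
      c 1 = u a ∧ c n = u b ∧
      (∀ i, 1 ≤ i → i < n → ∀ y ∈ Set.Ico (x (i - 1)) (x i), |c i - u y| < ε) ∧
      (∀ y ∈ Set.Icc (x (n - 1)) b, |c n - u y| < ε) ∧
      |(∑ i ∈ Finset.Ico 1 n, K (c (i + 1) - c i)) - (u b - u a)| < ε := by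
  intro ε hε
  have ha : a ∈ Set.Icc a b := ⟨le_rfl, hab.le⟩
  have hb : b ∈ Set.Icc a b := ⟨hab.le, le_rfl⟩
  set M : ℝ := u b - u a with hMdef
  have hM0 : 0 ≤ M := sub_nonneg.2 (hum ha hb hab.le)
  set ε' : ℝ := ε / (M + 1) with hε'def
  have hε' : 0 < ε' := div_pos hε (by linarith)
  obtain ⟨δ, hδ0, hδ⟩ := Metric.tendsto_nhdsWithin_nhds.mp hK3 ε' hε'
  have hucont : UniformContinuousOn u (Set.Icc a b) :=
    isCompact_Icc.uniformContinuousOn_of_continuous hu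
  have hmin : 0 < min ε δ := lt_min hε hδ0
  obtain ⟨δ', hδ'0, hδ'⟩ := Metric.uniformContinuousOn_iff.mp hucont (min ε δ) hmin
  obtain ⟨N, hN⟩ := exists_nat_gt (2 * (b - a) / δ')
  set n := max N 2 with hndef
  have hn2 : 2 ≤ n := le_max_right _ _
  have hnpos : 0 < (n : ℝ) := by positivity
  have hnN : (N : ℝ) ≤ (n : ℝ) := Nat.cast_le.mpr (le_max_left _ _)
  have hmesh : 2 * (b - a) / (n : ℝ) < δ' := by
    have h1 : 2 * (b - a) / δ' < (n : ℝ) := lt_of_lt_of_le hN hnN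
    have h2 : 2 * (b - a) < (n : ℝ) * δ' := (div_lt_iff₀ hδ'0).mp h1
    rw [div_lt_iff₀ hnpos]
    linarith
  set h : ℝ := (b - a) / (n : ℝ) with hhdef
  have hpos : 0 < h := div_pos (by linarith) hnpos
  have h2δ' : 2 * h < δ' := by
    rw [hhdef]; rw [mul_div_assoc] at hmesh; exact hmesh
  have hδ'h : h < δ' := by linarith
  set x : ℕ → ℝ := fun i => a + (i : ℝ) * h with hxdef
  have hx0 : x 0 = a := by simp [hxdef]
  have hxn : x n = b := by
    have hne : (n : ℝ) ≠ 0 := ne_of_gt hnpos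
    simp only [hxdef, hhdef]
    field_simp
    ring
  have hxs : ∀ i : ℕ, x (i + 1) = x i + h := by
    intro i; simp only [hxdef]; push_cast; ring
  have hxadd : ∀ j k : ℕ, x (j + k) = x j + (k : ℝ) * h := by
    intro j k; simp only [hxdef]; push_cast; ring
  have hxmono : ∀ i j : ℕ, i ≤ j → x i ≤ x j := by
    intro i j hij
    simp only [hxdef]
    have := mul_le_mul_of_nonneg_right (Nat.cast_le.mpr hij : (i : ℝ) ≤ j) hpos.le
    linarith
  have hxmem : ∀ i : ℕ, i ≤ n → x i ∈ Set.Icc a b := by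
    intro i hi
    constructor
    · have : 0 ≤ (i : ℝ) * h := by positivity
      simp only [hxdef]; linarith
    · calc x i ≤ x n := hxmono i n hi
        _ = b := hxn
  set c : ℕ → ℝ := fun i => if i = n then u b else u (x (i - 1)) with hcdef
  have hc1 : c 1 = u a := by
    have : (1 : ℕ) ≠ n := by omega
    simp [hcdef, this, hx0]
  have hcn : c n = u b := by simp [hcdef]
  have hci : ∀ i, i < n → c i = u (x (i - 1)) := by
    intro i hi; simp [hcdef, Nat.ne_of_lt hi]
  -- jump facts
  have hjump : ∀ i, 1 ≤ i → i < n → 0 ≤ c (i + 1) - c i ∧ c (i + 1) - c i < δ := by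
    intro i h1 h2
    have hi1 : i - 1 + 1 = i := Nat.succ_pred_eq_of_pos h1
    have hxi1mem : x (i - 1) ∈ Set.Icc a b := hxmem _ (by omega)
    have hcival : c i = u (x (i - 1)) := hci i h2
    rcases eq_or_lt_of_le (Nat.succ_le_of_lt h2) with hin | hin
    · -- i + 1 = n
      have hin' : i + 1 = n := hin
      have hcn' : c (i + 1) = u b := by rw [hin', hcn]
      have hdist : dist (x (i - 1)) b < δ' := by
        have hxb : b = x (i - 1) + 2 * h := by
          have h5 := hxadd (i - 1) 2
          rw [show i - 1 + 2 = n by omega] at h5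
          rw [← hxn, h5]; norm_num
        rw [Real.dist_eq, hxb]
        rw [abs_of_nonpos (by linarith)]
        linarith
      have := hδ' (x (i - 1)) hxi1mem b hb hdist
      rw [Real.dist_eq] at this
      constructor
      · rw [hcn', hcival]
        exact sub_nonneg.2 (hum hxi1mem hb hxi1mem.2)
      · rw [hcn', hcival]
        calc u b - u (x (i - 1)) ≤ |u (x (i - 1)) - u b| := by
              rw [abs_sub_comm]; exact le_abs_self _
          _ < min ε δ := this
          _ ≤ δ := min_le_right _ _
    · -- i + 1 < n
      have hcsucc : c (i + 1) = u (x i) := by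
        rw [hci (i + 1) hin]; simp
      have hxi : x i = x (i - 1) + h := by
        have h5 := hxadd (i - 1) 1
        rw [show i - 1 + 1 = i by omega] at h5
        rw [h5]; norm_num
      have hdist : dist (x (i - 1)) (x i) < δ' := by
        rw [Real.dist_eq, hxi, abs_of_nonpos (by linarith)]
        linarith
      have hximem : x i ∈ Set.Icc a b := hxmem _ (by omega)
      have := hδ' (x (i - 1)) hxi1mem (x i) hximem hdist
      rw [Real.dist_eq] at this
      constructor
      · rw [hcsucc, hcival]
        refine sub_nonneg.2 (hum hxi1mem hximem (hxmono _ _ (by omega)))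
      · rw [hcsucc, hcival]
        calc u (x i) - u (x (i - 1)) ≤ |u (x (i - 1)) - u (x i)| := by
              rw [abs_sub_comm]; exact le_abs_self _
          _ < min ε δ := this
          _ ≤ δ := min_le_right _ _
  refine ⟨n, x, c, by omega, hx0, hxn, ?_, ?_, hc1, hcn, ?_, ?_, ?_⟩
  · intro i _; rw [hxs i]; linarith
  · intro i h1 h2; linarith [(hjump i h1 h2).1]
  · -- uniform approximation on interior intervals
    intro i h1 h2 y hy
    have hi1 : i - 1 + 1 = i := Nat.succ_pred_eq_of_pos h1
    have hxi1mem : x (i - 1) ∈ Set.Icc a b := hxmem _ (by omega)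
    have hymem : y ∈ Set.Icc a b := by
      constructor
      · exact le_trans hxi1mem.1 hy.1
      · exact le_trans hy.2.le ((hxmono i n (le_of_lt h2)).trans hxn.le)
    have hxi : x i = x (i - 1) + h := by
      have h5 := hxadd (i - 1) 1
      rw [show i - 1 + 1 = i by omega] at h5
      rw [h5]; norm_num
    have hdist : dist (x (i - 1)) y < δ' := by
      rw [Real.dist_eq, abs_of_nonpos (by linarith [hy.1])]
      linarith [hy.2, hy.1]
    have := hδ' (x (i - 1)) hxi1mem y hymem hdist
    rw [Real.dist_eq] at this
    rw [hci i h2]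
    exact lt_of_lt_of_le this (min_le_left _ _)
  · -- last interval
    intro y hy
    have hxn1 : x (n - 1) = b - h := by
      have h5 := hxadd (n - 1) 1
      rw [show n - 1 + 1 = n by omega] at h5
      rw [← hxn, h5]; ring
    have hymem : y ∈ Set.Icc a b := by
      constructor
      · exact le_trans (hxmem (n - 1) (by omega)).1 hy.1
      · exact hy.2
    have hdist : dist b y < δ' := by
      rw [Real.dist_eq, abs_of_nonneg (by linarith [hy.2])]
      rw [hxn1] at hy
      linarith [hy.1]
    have := hδ' b hb y hymem hdist
    rw [Real.dist_eq] at this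
    rw [hcn]
    exact lt_of_lt_of_le this (min_le_left _ _)
  · -- sum estimate
    have hsum_d : ∑ i ∈ Finset.Ico 1 n, (c (i + 1) - c i) = M := by
      rw [telescope_aux c n (by omega), hcn, hc1]
    have hterm : ∀ i ∈ Finset.Ico 1 n,
        |K (c (i + 1) - c i) - (c (i + 1) - c i)| ≤ ε' * (c (i + 1) - c i) := by
      intro i hi
      obtain ⟨h1, h2⟩ := Finset.mem_Ico.mp hi
      obtain ⟨hd0, hdδ⟩ := hjump i h1 h2
      set d := c (i + 1) - c i with hddef
      rcases eq_or_lt_of_le hd0 with hd | hd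
      · rw [← hd, hK0]; simp
      · have hdist : dist d 0 < δ := by
          rw [Real.dist_eq, sub_zero, abs_of_pos hd]; exact hdδ
        have hK := hδ (Set.mem_Ioi.mpr hd) hdist
        rw [Real.dist_eq] at hK
        have hrw : K d - d = d * (K d / d - 1) := by
          field_simp
        rw [hrw, abs_mul, abs_of_pos hd]
        calc d * |K d / d - 1| ≤ d * ε' := by nlinarith [abs_nonneg (K d / d - 1)]
          _ = ε' * d := mul_comm _ _
    have hfinal : |(∑ i ∈ Finset.Ico 1 n, K (c (i + 1) - c i)) - M| ≤ ε' * M := by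
      calc |(∑ i ∈ Finset.Ico 1 n, K (c (i + 1) - c i)) - M|
          = |∑ i ∈ Finset.Ico 1 n, (K (c (i + 1) - c i) - (c (i + 1) - c i))| := by
            rw [Finset.sum_sub_distrib, hsum_d]
        _ ≤ ∑ i ∈ Finset.Ico 1 n, |K (c (i + 1) - c i) - (c (i + 1) - c i)| :=
            Finset.abs_sum_le_sum_abs _ _
        _ ≤ ∑ i ∈ Finset.Ico 1 n, ε' * (c (i + 1) - c i) := Finset.sum_le_sum hterm
        _ = ε' * ∑ i ∈ Finset.Ico 1 n, (c (i + 1) - c i) := (Finset.mul_sum _ _ _).symm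
        _ = ε' * M := by rw [hsum_d]
    have hlt : ε' * M < ε := by
      rw [hε'def, div_mul_eq_mul_div, div_lt_iff₀ (by linarith : (0:ℝ) < M + 1)]
      nlinarith
    calc |(∑ i ∈ Finset.Ico 1 n, K (c (i + 1) - c i)) - (u b - u a)| 
        = |(∑ i ∈ Finset.Ico 1 n, K (c (i + 1) - c i)) - M| := by rw [hMdef]
      _ ≤ ε' * M := hfinal
      _ < ε := hlt
end

section
/- Let a<b, let g(x) = px + q with p > 0, let λ > 0 and K(ρ) = ρ/(1+ρ). For a non-decreasing piecewise constant function v on (a,b) with finitely many jumps of sizes ρ₁,…,ρ_n, define the energy E(v) = ∑_{i=1}^n K(ρ_i) + (λ/2)∫_a^b |v − g|² dx. Suppose U minimizes E among all non-decreasing piecewise constant functions with finitely many jumps on (a,b), and that U has jump points a < a₁ < a₂ < ⋯ < a_m < b with m ≥ 1. Then the gaps a_{i+1} − a_i (i = 1,…,m−1) are all equal, and the jump sizes U(a_i+0) − U(a_i−0) (i = 1,…,m) are all equal. -/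
open intervalIntegral

/-- The KWC-type energy `TV_{Kg}` with `K(ρ) = ρ/(1+ρ)` and data `g(x) = p x + q`, of the
piecewise constant function on `(a,b)` determined by jump points `t 1 < ⋯ < t n` and
values `c 0, …, c n` (value `c i` between `t i` and `t (i+1)`), i.e. of
`v x = c 0 + ∑_{i=1}^n [t i < x] (c i - c (i-1))`. -/
noncomputable def stepEnergyAffine (a b lam p q : ℝ) (n : ℕ) (t c : ℕ → ℝ) : ℝ :=
  (∑ i ∈ Finset.Icc 1 n, (c i - c (i - 1)) / (1 + (c i - c (i - 1)))) +
    (lam / 2) * ∫ x in a..b,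
      ((c 0 + ∑ i ∈ Finset.Icc 1 n, if t i < x then c i - c (i - 1) else 0) -
        (p * x + q)) ^ 2

open Set

/-- strict monotonicity from successive -/
lemma kwc_mono {t : ℕ → ℝ} {n : ℕ} (h : ∀ i, i ≤ n → t i < t (i + 1)) :
    ∀ i j, i < j → j ≤ n + 1 → t i < t j := by
  intro i j hij hj
  induction j with
  | zero => omega
  | succ k ih =>
    rcases Nat.lt_or_ge i k with hk | hk
    · exact (ih hk (by omega)).trans (h k (by omega))
    · have : i = k := by omega
      subst this; exact h i (by omega)

/-- closed form for ∫ (C - (px+q))^2 -/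
lemma kwc_integral_affine (p q u v C : ℝ) (hp : p ≠ 0) :
    ∫ x in u..v, (C - (p * x + q)) ^ 2
      = ((C - p * u - q) ^ 3 - (C - p * v - q) ^ 3) / (3 * p) := by
  have h : ∀ x ∈ uIcc u v,
      HasDerivAt (fun y => -(C - p * y - q) ^ 3 / (3 * p)) ((C - (p * x + q)) ^ 2) x := by
    intro x _
    have h1 : HasDerivAt (fun y => C - p * y - q) (-p) x := by
      simpa using (((hasDerivAt_id x).const_mul p).const_sub C).sub_const q
    have h2 := (h1.pow 3).neg.div_const (3 * p)
    refine h2.congr_deriv (Eq.symm ?_)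
    field_simp
    ring
  have hi : IntervalIntegrable (fun x => (C - (p * x + q)) ^ 2) MeasureTheory.volume u v := by
    apply Continuous.intervalIntegrable; continuity
  rw [integral_eq_sub_of_hasDerivAt h hi]
  ring

lemma kwc_telescope (c : ℕ → ℝ) (j : ℕ) :
    ∑ i ∈ Finset.Icc 1 j, (c i - c (i - 1)) = c j - c 0 := by
  induction j with
  | zero => simp
  | succ k ih =>
    rw [Finset.sum_Icc_succ_top (by omega), ih]
    simp

lemma kwc_step_val {t c : ℕ → ℝ} {n j : ℕ} (hmono : ∀ i, i ≤ n → t i < t (i + 1))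
    (hj : j ≤ n) {x : ℝ} (hx : x ∈ Ioo (t j) (t (j + 1))) :
    (c 0 + ∑ i ∈ Finset.Icc 1 n, if t i < x then c i - c (i - 1) else 0) = c j := by
  have hsplit : ∑ i ∈ Finset.Icc 1 n, (if t i < x then c i - c (i - 1) else 0)
      = (∑ i ∈ Finset.Icc 1 j, (if t i < x then c i - c (i - 1) else 0))
        + ∑ i ∈ Finset.Ioc j n, (if t i < x then c i - c (i - 1) else 0) := by
    rw [show Finset.Icc 1 n = Finset.Ioc 0 n from (Finset.Icc_add_one_left_eq_Ioc 0 n).symm,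
      show Finset.Icc 1 j = Finset.Ioc 0 j from (Finset.Icc_add_one_left_eq_Ioc 0 j).symm,
      Finset.sum_Ioc_consecutive _ (Nat.zero_le j) hj]
  rw [hsplit]
  have h1 : ∑ i ∈ Finset.Icc 1 j, (if t i < x then c i - c (i - 1) else 0)
      = ∑ i ∈ Finset.Icc 1 j, (c i - c (i - 1)) := by
    apply Finset.sum_congr rfl
    intro i hi
    simp only [Finset.mem_Icc] at hi
    have : t i < x := by
      rcases Nat.lt_or_ge i j with h | h
      · exact (kwc_mono hmono i j h (by omega)).trans hx.1
      · have : i = j := by omega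
        subst this; exact hx.1
    simp [this]
  have h2 : ∑ i ∈ Finset.Ioc j n, (if t i < x then c i - c (i - 1) else 0) = 0 := by
    apply Finset.sum_eq_zero
    intro i hi
    simp only [Finset.mem_Ioc] at hi
    have : ¬ t i < x := by
      push_neg
      rcases Nat.lt_or_ge (j + 1) i with h | h
      · exact le_of_lt (hx.2.trans (kwc_mono hmono (j+1) i h (by omega)))
      · have : i = j + 1 := by omega
        subst this; exact le_of_lt hx.2
    simp [this]
  rw [h1, h2, kwc_telescope]
  ring

lemma kwc_energy_formula (a b lam p q : ℝ) (hp : p ≠ 0) (n : ℕ) (t c : ℕ → ℝ)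
    (ht0 : t 0 = a) (htn : t (n + 1) = b) (hmono : ∀ i, i ≤ n → t i < t (i + 1)) :
    stepEnergyAffine a b lam p q n t c
      = (∑ i ∈ Finset.Icc 1 n, (c i - c (i - 1)) / (1 + (c i - c (i - 1)))) +
        (lam / 2) * ∑ j ∈ Finset.range (n + 1),
          ((c j - p * t j - q) ^ 3 - (c j - p * t (j + 1) - q) ^ 3) / (3 * p) := by
  set f : ℝ → ℝ := fun x =>
    ((c 0 + ∑ i ∈ Finset.Icc 1 n, if t i < x then c i - c (i - 1) else 0) -
      (p * x + q)) ^ 2 with hf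
  have key : ∀ k, k ≤ n →
      (f =ᵐ[MeasureTheory.volume.restrict (Set.uIoc (t k) (t (k + 1)))]
        fun x => (c k - (p * x + q)) ^ 2) := by
    intro k hk
    have hlt : t k < t (k + 1) := hmono k hk
    rw [uIoc_of_le hlt.le]
    have hne : ∀ᵐ x : ℝ, x ≠ t (k + 1) := by
      refine MeasureTheory.ae_iff.2 ?_
      have : {x : ℝ | ¬ x ≠ t (k + 1)} = {t (k + 1)} := by ext y; simp
      rw [this]; exact Real.volume_singleton
    filter_upwards [MeasureTheory.ae_restrict_of_ae hne,
      MeasureTheory.ae_restrict_mem measurableSet_Ioc] with x hx1 hx2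
    have hxo : x ∈ Ioo (t k) (t (k + 1)) := ⟨hx2.1, lt_of_le_of_ne hx2.2 hx1⟩
    simp only [hf]
    rw [kwc_step_val hmono hk hxo]
  have hint : ∀ k, k < n + 1 →
      IntervalIntegrable f MeasureTheory.volume (t k) (t (k + 1)) := by
    intro k hk
    refine IntervalIntegrable.congr_ae ?_ ((key k (by omega)).symm)
    apply Continuous.intervalIntegrable
    continuity
  have hsum := intervalIntegral.sum_integral_adjacent_intervals
    (a := t) (n := n + 1) (f := f) (μ := MeasureTheory.volume) hint
  rw [ht0, htn] at hsum
  have : ∫ x in a..b, f x = ∑ j ∈ Finset.range (n + 1),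
      ((c j - p * t j - q) ^ 3 - (c j - p * t (j + 1) - q) ^ 3) / (3 * p) := by
    rw [← hsum]
    refine Finset.sum_congr rfl (fun k hk => ?_)
    have hk' : k ≤ n := by simpa using Nat.lt_succ_iff.1 (Finset.mem_range.1 hk)
    rw [intervalIntegral.integral_congr_ae (MeasureTheory.ae_imp_of_ae_restrict (key k hk'))]
    exact kwc_integral_affine p q (t k) (t (k + 1)) (c k) hp
  rw [stepEnergyAffine, ← this]

lemma kwc_sum_diff_two {s : Finset ℕ} {f g : ℕ → ℝ} {i j : ℕ} (hij : i ≠ j)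
    (hi : i ∈ s) (hj : j ∈ s) (h : ∀ k ∈ s, k ≠ i → k ≠ j → f k = g k) :
    (∑ k ∈ s, f k) - ∑ k ∈ s, g k = (f i - g i) + (f j - g j) := by
  have hsub : ({i, j} : Finset ℕ) ⊆ s := by
    intro k hk
    simp only [Finset.mem_insert, Finset.mem_singleton] at hk
    rcases hk with rfl | rfl <;> assumption
  have := Finset.sum_subset hsub (f := fun k => f k - g k) ?_
  · rw [← Finset.sum_sub_distrib, ← this, Finset.sum_pair hij]
  · intro k hk hk'
    simp only [Finset.mem_insert, Finset.mem_singleton] at hk'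
    push_neg at hk'
    exact sub_eq_zero.2 (h k hk hk'.1 hk'.2)

lemma kwc_phi_sum (p q : ℝ) (hp : p ≠ 0) (t c : ℕ → ℝ) (m : ℕ) (hm : 1 ≤ m)
    (hmid : ∀ i, 1 ≤ i → i ≤ m → 2 * (p * t i + q) = c (i - 1) + c i) :
    ∑ j ∈ Finset.range (m + 1),
        ((c j - p * t j - q) ^ 3 - (c j - p * t (j + 1) - q) ^ 3)
      = (c 0 - p * t 0 - q) ^ 3 - (c m - p * t (m + 1) - q) ^ 3
        + ∑ i ∈ Finset.Icc 1 m, (c i - c (i - 1)) ^ 3 / 4 := by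
  induction m with
  | zero => omega
  | succ k ih =>
    have hmid' : t (k + 1) = (c k + c (k + 1) - 2 * q) / (2 * p) := by
      have h := hmid (k + 1) (by omega) (by omega)
      simp only [Nat.add_sub_cancel] at h
      field_simp
      linarith
    rcases Nat.eq_zero_or_pos k with rfl | hk
    · rw [Finset.sum_range_succ, Finset.sum_range_one]
      have : Finset.Icc 1 1 = {1} := rfl
      rw [this, Finset.sum_singleton]
      simp only [Nat.sub_self]
      rw [hmid']
      field_simp
      ring
    · rw [Finset.sum_range_succ, ih hk (fun i h1 h2 => hmid i h1 (by omega)),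
        Finset.sum_Icc_succ_top (by omega : 1 ≤ k + 1)]
      simp only [Nat.add_sub_cancel]
      rw [hmid']
      field_simp
      ring

lemma kwc_second_deriv_test {f f1 : ℝ → ℝ} {x s ε : ℝ} (hε : 0 < ε)
    (hmin : IsLocalMin f x)
    (hd : ∀ y ∈ Ioo (x - ε) (x + ε), HasDerivAt f (f1 y) y)
    (hdd : HasDerivAt f1 s x) : 0 ≤ s := by
  by_contra hs
  push_neg at hs
  have hx : x ∈ Ioo (x - ε) (x + ε) := ⟨by linarith, by linarith⟩
  have h0 : f1 x = 0 := hmin.hasDerivAt_eq_zero (hd x hx)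
  have hslope := hasDerivAt_iff_tendsto_slope.1 hdd
  have hev : ∀ᶠ y in nhdsWithin x {x}ᶜ, slope f1 x y < s / 2 :=
    hslope.eventually_lt_const (by linarith)
  have hev' : ∀ᶠ y in nhdsWithin x (Ioi x), slope f1 x y < s / 2 :=
    hev.filter_mono (nhdsWithin_mono x (fun y hy => ne_of_gt hy))
  rw [eventually_nhdsWithin_iff, Metric.eventually_nhds_iff] at hev'
  obtain ⟨δ, hδ, hδP⟩ := hev'
  have hminev := hmin
  rw [IsLocalMin, IsMinFilter, Metric.eventually_nhds_iff] at hminev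
  obtain ⟨r, hr, hrP⟩ := hminev
  obtain ⟨z, hz1, hz2, hz3, hz4⟩ :
      ∃ z, x < z ∧ z - x < δ ∧ z - x < r ∧ z - x < ε := by
    refine ⟨x + min δ (min r ε) / 2, ?_, ?_, ?_, ?_⟩
    · have h1 : 0 < min δ (min r ε) := lt_min hδ (lt_min hr hε)
      linarith
    · have h1 : min δ (min r ε) ≤ δ := min_le_left _ _
      linarith
    · have h1 : min δ (min r ε) ≤ r := le_trans (min_le_right _ _) (min_le_left _ _)
      linarith
    · have h1 : min δ (min r ε) ≤ ε := le_trans (min_le_right _ _) (min_le_right _ _)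
      linarith
  have hneg : ∀ y ∈ Ioo x z, f1 y < 0 := by
    intro y hy
    have hyx : dist y x < δ := by
      rw [Real.dist_eq, abs_of_pos (by linarith [hy.1] : (0:ℝ) < y - x)]
      linarith [hy.2]
    have hsl := hδP hyx hy.1
    rw [slope_def_field, h0] at hsl
    have hyx' : 0 < y - x := by linarith [hy.1]
    have h2 : f1 y / (y - x) < s / 2 := by
      have : (f1 y - 0) / (y - x) < s / 2 := hsl
      simpa using this
    have := (div_lt_iff₀ hyx').1 h2
    nlinarith
  have hsub : Icc x z ⊆ Ioo (x - ε) (x + ε) := by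
    intro y hy
    exact ⟨by linarith [hy.1], by linarith [hy.2]⟩
  have hanti : StrictAntiOn f (Icc x z) := by
    apply strictAntiOn_of_deriv_neg (convex_Icc x z)
    · intro y hy
      exact (hd y (hsub hy)).continuousAt.continuousWithinAt
    · intro y hy
      rw [interior_Icc] at hy
      rw [(hd y (hsub ⟨hy.1.le, hy.2.le⟩)).deriv]
      exact hneg y hy
  have hlt : f z < f x := hanti (left_mem_Icc.2 hz1.le) (right_mem_Icc.2 hz1.le) hz1
  have hge : f x ≤ f z := by
    apply hrP
    rw [Real.dist_eq, abs_of_pos (by linarith : (0:ℝ) < z - x)]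
    linarith
  linarith

set_option maxHeartbeats 1600000 in
lemma kwc_pair_eq {r1 r2 κ : ℝ} (h1 : 0 < r1) (h2 : 0 < r2) (hκ : 0 < κ)
    (hmin : IsLocalMin (fun η =>
      (r1 + η) / (1 + (r1 + η)) + (r2 - η) / (1 + (r2 - η))
        + κ * ((r1 + η) ^ 3 + (r2 - η) ^ 3)) 0) : r1 = r2 := by
  have hε : 0 < min r1 r2 := lt_min h1 h2
  have e1 : min r1 r2 ≤ r1 := min_le_left _ _
  have e2 : min r1 r2 ≤ r2 := min_le_right _ _
  have hder : ∀ y ∈ Ioo ((0:ℝ) - min r1 r2) (0 + min r1 r2),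
      HasDerivAt (fun η =>
        (r1 + η) / (1 + (r1 + η)) + (r2 - η) / (1 + (r2 - η))
          + κ * ((r1 + η) ^ 3 + (r2 - η) ^ 3))
        (1 / (1 + (r1 + y)) ^ 2 - 1 / (1 + (r2 - y)) ^ 2
          + κ * (3 * (r1 + y) ^ 2 - 3 * (r2 - y) ^ 2)) y := by
    intro y hy
    have hy1 : (0:ℝ) < 1 + (r1 + y) := by
      have := hy.1; simp only [zero_sub] at this; linarith
    have hy2 : (0:ℝ) < 1 + (r2 - y) := by
      have := hy.2; simp only [zero_add] at this; linarith
    have hA : HasDerivAt (fun η : ℝ => r1 + η) 1 y := by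
      simpa using (hasDerivAt_id y).const_add r1
    have hA' : HasDerivAt (fun η : ℝ => 1 + (r1 + η)) 1 y := hA.const_add 1
    have hB : HasDerivAt (fun η : ℝ => r2 - η) (-1) y := by
      simpa using (hasDerivAt_id y).const_sub r2
    have hB' : HasDerivAt (fun η : ℝ => 1 + (r2 - η)) (-1) y := hB.const_add 1
    have hq1 : HasDerivAt (fun η : ℝ => (r1 + η) / (1 + (r1 + η)))
        (1 / (1 + (r1 + y)) ^ 2) y := by
      have := hA.div hA' (ne_of_gt hy1)
      refine this.congr_deriv (Eq.symm ?_)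
      field_simp
      try ring
    have hq2 : HasDerivAt (fun η : ℝ => (r2 - η) / (1 + (r2 - η)))
        (-(1 / (1 + (r2 - y)) ^ 2)) y := by
      have := hB.div hB' (ne_of_gt hy2)
      refine this.congr_deriv (Eq.symm ?_)
      field_simp
      try ring
    have hq3 : HasDerivAt (fun η : ℝ => κ * ((r1 + η) ^ 3 + (r2 - η) ^ 3))
        (κ * (3 * (r1 + y) ^ 2 - 3 * (r2 - y) ^ 2)) y := by
      have := ((hA.pow 3).add (hB.pow 3)).const_mul κ
      refine this.congr_deriv (Eq.symm ?_)
      try push_cast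
      try ring
    have := (hq1.add hq2).add hq3
    refine this.congr_deriv (Eq.symm ?_)
    try ring
  have hy10 : (0:ℝ) < 1 + (r1 + 0) := by linarith
  have hy20 : (0:ℝ) < 1 + (r2 - 0) := by linarith
  have hA0 : HasDerivAt (fun η : ℝ => r1 + η) 1 0 := by
    simpa using (hasDerivAt_id (0:ℝ)).const_add r1
  have hA0' : HasDerivAt (fun η : ℝ => 1 + (r1 + η)) 1 0 := hA0.const_add 1
  have hB0 : HasDerivAt (fun η : ℝ => r2 - η) (-1) 0 := by
    simpa using (hasDerivAt_id (0:ℝ)).const_sub r2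
  have hB0' : HasDerivAt (fun η : ℝ => 1 + (r2 - η)) (-1) 0 := hB0.const_add 1
  have hd1 : HasDerivAt (fun η : ℝ => 1 / (1 + (r1 + η)) ^ 2)
      (-2 / (1 + r1) ^ 3) 0 := by
    have hpow : HasDerivAt (fun η : ℝ => (1 + (r1 + η)) ^ 2)
        (2 * (1 + (r1 + 0)) ^ 1 * 1) 0 := hA0'.pow 2
    have := (hasDerivAt_const (0:ℝ) (1:ℝ)).div hpow (by positivity)
    refine this.congr_deriv (Eq.symm ?_)
    field_simp
    ring
  have hd2 : HasDerivAt (fun η : ℝ => 1 / (1 + (r2 - η)) ^ 2)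
      (2 / (1 + r2) ^ 3) 0 := by
    have hpow : HasDerivAt (fun η : ℝ => (1 + (r2 - η)) ^ 2)
        (2 * (1 + (r2 - 0)) ^ 1 * (-1)) 0 := hB0'.pow 2
    have := (hasDerivAt_const (0:ℝ) (1:ℝ)).div hpow (by positivity)
    refine this.congr_deriv (Eq.symm ?_)
    field_simp
    ring
  have hd3 : HasDerivAt (fun η : ℝ => κ * (3 * (r1 + η) ^ 2 - 3 * (r2 - η) ^ 2))
      (κ * (6 * r1 + 6 * r2)) 0 := by
    have := (((hA0.pow 2).const_mul (3:ℝ)).sub ((hB0.pow 2).const_mul (3:ℝ))).const_mul κ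
    refine this.congr_deriv (Eq.symm ?_)
    push_cast
    ring
  have hf1der : HasDerivAt (fun y : ℝ => 1 / (1 + (r1 + y)) ^ 2 - 1 / (1 + (r2 - y)) ^ 2
      + κ * (3 * (r1 + y) ^ 2 - 3 * (r2 - y) ^ 2))
      (-2 / (1 + r1) ^ 3 - 2 / (1 + r2) ^ 3 + κ * (6 * r1 + 6 * r2)) 0 :=
    (hd1.sub hd2).add hd3
  have hfirst : 1 / (1 + (r1 + 0)) ^ 2 - 1 / (1 + (r2 - 0)) ^ 2
      + κ * (3 * (r1 + 0) ^ 2 - 3 * (r2 - 0) ^ 2) = 0 :=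
    hmin.hasDerivAt_eq_zero (hder 0 ⟨by simpa using hε, by simpa using hε⟩)
  have hsecond : 0 ≤ -2 / (1 + r1) ^ 3 - 2 / (1 + r2) ^ 3 + κ * (6 * r1 + 6 * r2) :=
    kwc_second_deriv_test hε hmin hder hf1der
  -- algebra
  by_contra hne
  have hu : (0:ℝ) < 1 + r1 := by linarith
  have hv : (0:ℝ) < 1 + r2 := by linarith
  simp only [add_zero, sub_zero] at hfirst
  have hfirst' : ((1 + r2) ^ 2 - (1 + r1) ^ 2)
      = 3 * κ * ((1 + r1) + (1 + r2) - 2) * ((1 + r2) - (1 + r1))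
        * (1 + r1) ^ 2 * (1 + r2) ^ 2 := by
    have h := hfirst
    field_simp at h
    nlinarith [h]
  have hcancel : ((1 + r2) + (1 + r1))
      = 3 * κ * ((1 + r1) + (1 + r2) - 2) * (1 + r1) ^ 2 * (1 + r2) ^ 2 := by
    have hvu : (1 + r2) - (1 + r1) ≠ 0 := by
      intro h; apply hne; linarith [sub_eq_zero.1 h]
    have : ((1 + r2) - (1 + r1)) * (((1 + r2) + (1 + r1)))
        = ((1 + r2) - (1 + r1)) * (3 * κ * ((1 + r1) + (1 + r2) - 2)
            * (1 + r1) ^ 2 * (1 + r2) ^ 2) := by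
      nlinarith [hfirst']
    exact mul_left_cancel₀ hvu this
  have hsecond' : 0 ≤ -2 * (1 + r2) ^ 3 - 2 * (1 + r1) ^ 3
      + κ * (6 * r1 + 6 * r2) * (1 + r1) ^ 3 * (1 + r2) ^ 3 := by
    have hpos : (0:ℝ) < (1 + r1) ^ 3 * (1 + r2) ^ 3 := by positivity
    have := mul_nonneg hsecond (le_of_lt hpos)
    have heq : (-2 / (1 + r1) ^ 3 - 2 / (1 + r2) ^ 3 + κ * (6 * r1 + 6 * r2))
        * ((1 + r1) ^ 3 * (1 + r2) ^ 3)
        = -2 * (1 + r2) ^ 3 - 2 * (1 + r1) ^ 3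
          + κ * (6 * r1 + 6 * r2) * (1 + r1) ^ 3 * (1 + r2) ^ 3 := by
      field_simp
    linarith [heq ▸ this]
  have hsq : (0:ℝ) < ((1 + r1) - (1 + r2)) ^ 2 := by
    have : (1 + r1) - (1 + r2) ≠ 0 := by
      intro h; apply hne; linarith [sub_eq_zero.1 h]
    exact lt_of_le_of_ne (sq_nonneg _) (Ne.symm (pow_ne_zero 2 this))
  nlinarith [hcancel, hsecond', hsq, mul_pos hu hv, mul_pos (mul_pos hu hv) (add_pos hu hv)]

set_option maxHeartbeats 3000000 in
/-- Theorem 1.7 / 4.9: for increasing affine data `g(x) = px + q` and `K(ρ) = ρ/(1+ρ)`,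
any minimizer `U` of `TV_{Kg}` among non-decreasing piecewise constant functions with
finitely many jumps on `(a,b)`, with jump points `a < a₁ < ⋯ < a_m < b`, has all gaps
`a_{i+1} - a_i` equal and all jump sizes equal. -/
theorem equal_jumps_of_minimizer (a b p q lam : ℝ) (hab : a < b) (hp : 0 < p)
    (hlam : 0 < lam)
    (m : ℕ) (hm : 1 ≤ m) (t c : ℕ → ℝ)
    (ht0 : t 0 = a) (htm : t (m + 1) = b)
    (htmono : ∀ i, i ≤ m → t i < t (i + 1))
    (hjump : ∀ i, 1 ≤ i → i ≤ m → c (i - 1) < c i)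
    (hmin : ∀ (n : ℕ) (t' c' : ℕ → ℝ), t' 0 = a → t' (n + 1) = b →
      (∀ i, i ≤ n → t' i < t' (i + 1)) → (∀ i, 1 ≤ i → i ≤ n → c' (i - 1) ≤ c' i) →
      stepEnergyAffine a b lam p q m t c ≤ stepEnergyAffine a b lam p q n t' c') :
    (∀ i j, 1 ≤ i → i < m → 1 ≤ j → j < m → t (i + 1) - t i = t (j + 1) - t j) ∧
      (∀ i j, 1 ≤ i → i ≤ m → 1 ≤ j → j ≤ m → c i - c (i - 1) = c j - c (j - 1)) := by
  have hp' : p ≠ 0 := ne_of_gt hp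
  have hEU := kwc_energy_formula a b lam p q hp' m t c ht0 htm htmono
  -- Step 1 : midpoint property
  have hmid : ∀ i, 1 ≤ i → i ≤ m → 2 * (p * t i + q) = c (i - 1) + c i := by
    intro i h1 hi
    by_contra hw
    have hii : i - 1 + 1 = i := by omega
    have htl : t (i - 1) < t i := by
      have h := htmono (i - 1) (by omega); rwa [hii] at h
    have htr : t i < t (i + 1) := htmono i (by omega)
    set σ := c (i - 1) + c i with hσ
    set w := 2 * (p * t i + q) - σ with hwdef
    have hw0 : w ≠ 0 := sub_ne_zero.2 hw
    set r := min (t i - t (i - 1)) (t (i + 1) - t i) with hrdef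
    have hr : 0 < r := lt_min (by linarith) (by linarith)
    have hrl : r ≤ t i - t (i - 1) := min_le_left _ _
    have hrr : r ≤ t (i + 1) - t i := min_le_right _ _
    set e := min (1 / (2 * p)) (r / (2 * |w| + 2)) with hedef
    have habs : (0:ℝ) < 2 * |w| + 2 := by positivity
    have he : 0 < e := lt_min (by positivity) (by positivity)
    have he2 : e ≤ 1 / (2 * p) := min_le_left _ _
    have he3 : e ≤ r / (2 * |w| + 2) := min_le_right _ _
    set δ := w * e with hδdef
    have hδr : |δ| < r := by
      have h1' : |δ| = |w| * e := by
        rw [hδdef, abs_mul, abs_of_pos he]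
      have h2' : |w| * e ≤ |w| * (r / (2 * |w| + 2)) :=
        mul_le_mul_of_nonneg_left he3 (abs_nonneg w)
      have h3' : |w| * (r / (2 * |w| + 2)) < r := by
        rw [mul_div_assoc', div_lt_iff₀ habs]
        nlinarith [abs_nonneg w, hr]
      linarith
    set s' := t i - δ with hs'def
    have habs1 : δ ≤ |δ| := le_abs_self δ
    have habs2 : -|δ| ≤ δ := neg_abs_le δ
    have hs'l : t (i - 1) < s' := by rw [hs'def]; linarith
    have hs'r : s' < t (i + 1) := by rw [hs'def]; linarith
    set t' := Function.update t i s' with ht'def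
    have ht'0 : t' 0 = a := by
      rw [ht'def, Function.update_of_ne (by omega : (0:ℕ) ≠ i)]; exact ht0
    have ht'm : t' (m + 1) = b := by
      rw [ht'def, Function.update_of_ne (by omega : m + 1 ≠ i)]; exact htm
    have hmono' : ∀ k, k ≤ m → t' k < t' (k + 1) := by
      intro k hk
      rcases eq_or_ne k i with rfl | hki
      · rw [ht'def, Function.update_self, Function.update_of_ne (by omega : k + 1 ≠ k)]
        exact hs'r
      rcases eq_or_ne (k + 1) i with hk1 | hk1
      · have hkk : k = i - 1 := by omega
        rw [ht'def, Function.update_of_ne hki, hk1, Function.update_self, hkk]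
        exact hs'l
      · rw [ht'def, Function.update_of_ne hki, Function.update_of_ne hk1]
        exact htmono k hk
    have hc' : ∀ k, 1 ≤ k → k ≤ m → c (k - 1) ≤ c k := fun k a1 a2 => (hjump k a1 a2).le
    have hle := hmin m t' c ht'0 ht'm hmono' hc'
    have hE' := kwc_energy_formula a b lam p q hp' m t' c ht'0 ht'm hmono'
    have hv1 : t' (i - 1) = t (i - 1) := Function.update_of_ne (by omega) _ _
    have hv3 : t' i = s' := Function.update_self _ _ _
    have hv4 : t' (i + 1) = t (i + 1) := Function.update_of_ne (by omega) _ _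
    have hdiff := kwc_sum_diff_two (s := Finset.range (m + 1))
      (f := fun j => ((c j - p * t' j - q) ^ 3 - (c j - p * t' (j + 1) - q) ^ 3) / (3 * p))
      (g := fun j => ((c j - p * t j - q) ^ 3 - (c j - p * t (j + 1) - q) ^ 3) / (3 * p))
      (i := i - 1) (j := i) (by omega)
      (Finset.mem_range.2 (by omega)) (Finset.mem_range.2 (by omega))
      (by
        intro k hk hk1 hk2
        have e1 : t' k = t k := Function.update_of_ne hk2 _ _
        have e2 : t' (k + 1) = t (k + 1) := Function.update_of_ne (by omega) _ _
        simp only [e1, e2])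
    simp only [hii, hv1, hv3, hv4] at hdiff
    have hρ : 0 < c i - c (i - 1) := sub_pos.2 (hjump i h1 hi)
    have hdiff2 : (∑ j ∈ Finset.range (m + 1),
          ((c j - p * t' j - q) ^ 3 - (c j - p * t' (j + 1) - q) ^ 3) / (3 * p))
        - ∑ j ∈ Finset.range (m + 1),
          ((c j - p * t j - q) ^ 3 - (c j - p * t (j + 1) - q) ^ 3) / (3 * p)
        = (c i - c (i - 1)) * (s' - t i) * (p * (s' + t i) + 2 * q - σ) := by
      rw [hdiff, hσ]
      field_simp
      ring
    have hw2 : 0 < w ^ 2 := lt_of_le_of_ne (sq_nonneg w) (Ne.symm (pow_ne_zero 2 hw0))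
    have hpe : p * e ≤ 1 / 2 := by
      have h5 := mul_le_mul_of_nonneg_left he2 hp.le
      have hpp : p * (1 / (2 * p)) = 1 / 2 := by field_simp <;> ring
      linarith
    have hneg : (c i - c (i - 1)) * (s' - t i) * (p * (s' + t i) + 2 * q - σ) < 0 := by
      have h1' : s' - t i = -(w * e) := by rw [hs'def, hδdef]; ring
      have h2' : p * (s' + t i) + 2 * q - σ = w - p * (w * e) := by
        rw [hs'def, hδdef, hwdef]
        ring
      rw [h1', h2']
      have expand : (c i - c (i - 1)) * (-(w * e)) * (w - p * (w * e))
          = -((c i - c (i - 1)) * e * w ^ 2 * (1 - p * e)) := by ring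
      rw [expand]
      have hgt : 0 < (c i - c (i - 1)) * e * w ^ 2 * (1 - p * e) := by
        apply mul_pos (mul_pos (mul_pos hρ he) hw2)
        linarith
      linarith
    have hXlt : (∑ j ∈ Finset.range (m + 1),
          ((c j - p * t' j - q) ^ 3 - (c j - p * t' (j + 1) - q) ^ 3) / (3 * p))
        < ∑ j ∈ Finset.range (m + 1),
          ((c j - p * t j - q) ^ 3 - (c j - p * t (j + 1) - q) ^ 3) / (3 * p) := by
      have h6 : (∑ j ∈ Finset.range (m + 1),
            ((c j - p * t' j - q) ^ 3 - (c j - p * t' (j + 1) - q) ^ 3) / (3 * p))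
          - ∑ j ∈ Finset.range (m + 1),
            ((c j - p * t j - q) ^ 3 - (c j - p * t (j + 1) - q) ^ 3) / (3 * p) < 0 := by
        rw [hdiff2]; exact hneg
      linarith [h6]
    have hmul := mul_lt_mul_of_pos_left hXlt (by linarith : (0:ℝ) < lam / 2)
    rw [hEU, hE'] at hle
    linarith [hle, hmul]
  -- Step 2 : adjacent jumps are equal
  have hadj : ∀ i, 1 ≤ i → i + 1 ≤ m → c i - c (i - 1) = c (i + 1) - c i := by
    intro i h1i hi1m
    have hii : i - 1 + 1 = i := by omega
    have hg1 : t (i - 1) < t i := by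
      have h := htmono (i - 1) (by omega); rwa [hii] at h
    have hg2 : t (i + 1 + 1) < t (i + 1 + 1) ∨ True := Or.inr trivial
    have hg3 : t (i + 1) < t (i + 1 + 1) := htmono (i + 1) hi1m
    have hρ1 : 0 < c i - c (i - 1) := sub_pos.2 (hjump i h1i (by omega))
    have hρ2 : 0 < c (i + 1) - c i := by
      have h := hjump (i + 1) (by omega) hi1m
      simp only [Nat.add_sub_cancel] at h
      linarith
    refine kwc_pair_eq hρ1 hρ2 (show 0 < lam / (24 * p) by positivity) ?_
    set ε0 := min (min (c i - c (i - 1)) (c (i + 1) - c i))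
      (min (2 * p * (t i - t (i - 1))) (2 * p * (t (i + 1 + 1) - t (i + 1)))) with hε0def
    have hε0 : 0 < ε0 := by
      apply lt_min (lt_min hρ1 hρ2)
      apply lt_min <;> nlinarith
    have hε0a : ε0 ≤ c i - c (i - 1) := le_trans (min_le_left _ _) (min_le_left _ _)
    have hε0b : ε0 ≤ c (i + 1) - c i := le_trans (min_le_left _ _) (min_le_right _ _)
    have hε0c : ε0 ≤ 2 * p * (t i - t (i - 1)) := le_trans (min_le_right _ _) (min_le_left _ _)
    have hε0d : ε0 ≤ 2 * p * (t (i + 1 + 1) - t (i + 1)) :=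
      le_trans (min_le_right _ _) (min_le_right _ _)
    have hmain : ∀ η ∈ Set.Ioo (-ε0) ε0,
        (fun η => (c i - c (i - 1) + η) / (1 + (c i - c (i - 1) + η))
          + (c (i + 1) - c i - η) / (1 + (c (i + 1) - c i - η))
          + lam / (24 * p) * ((c i - c (i - 1) + η) ^ 3 + (c (i + 1) - c i - η) ^ 3)) 0
        ≤ (fun η => (c i - c (i - 1) + η) / (1 + (c i - c (i - 1) + η))
          + (c (i + 1) - c i - η) / (1 + (c (i + 1) - c i - η))
          + lam / (24 * p) * ((c i - c (i - 1) + η) ^ 3 + (c (i + 1) - c i - η) ^ 3)) η := by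
      intro η hη
      simp only
      have hη1 : -ε0 < η := hη.1
      have hη2 : η < ε0 := hη.2
      have h2p : (0:ℝ) < 2 * p := by positivity
      set cη := Function.update c i (c i + η) with hcη
      set tη : ℕ → ℝ := fun k => if k = i ∨ k = i + 1 then t k + η / (2 * p) else t k
        with htη
      have cvi : cη i = c i + η := by rw [hcη]; exact Function.update_self _ _ _
      have cvo : ∀ k, k ≠ i → cη k = c k := by
        intro k hk; rw [hcη]; exact Function.update_of_ne hk _ _
      have tvi : tη i = t i + η / (2 * p) := by rw [htη]; simp
      have tvi1 : tη (i + 1) = t (i + 1) + η / (2 * p) := by rw [htη]; simp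
      have tvo : ∀ k, k ≠ i → k ≠ i + 1 → tη k = t k := by
        intro k hk1 hk2
        rw [htη]
        exact if_neg (by push_neg; exact ⟨hk1, hk2⟩)
      have ht0η : tη 0 = a := by rw [tvo 0 (by omega) (by omega)]; exact ht0
      have htmη : tη (m + 1) = b := by rw [tvo (m + 1) (by omega) (by omega)]; exact htm
      have hdiv1 : -(t i - t (i - 1)) < η / (2 * p) := by
        rw [lt_div_iff₀ h2p]; nlinarith
      have hdiv2 : η / (2 * p) < t (i + 1 + 1) - t (i + 1) := by
        rw [div_lt_iff₀ h2p]; nlinarith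
      have hmonoη : ∀ k, k ≤ m → tη k < tη (k + 1) := by
        intro k hk
        rcases eq_or_ne k i with rfl | hki
        · rw [tvi, tvi1]
          have := htmono k (by omega)
          linarith
        rcases eq_or_ne (k + 1) i with hk1 | hk1
        · rw [tvo k hki (by omega), hk1, tvi, show k = i - 1 by omega]
          linarith
        rcases eq_or_ne k (i + 1) with rfl | hki1
        · rw [tvi1, tvo (i + 1 + 1) (by omega) (by omega)]
          linarith
        · rw [tvo k hki hki1, tvo (k + 1) hk1 (by omega)]
          exact htmono k hk
      have hcmono : ∀ k, 1 ≤ k → k ≤ m → cη (k - 1) ≤ cη k := by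
        intro k h1k hkm
        rcases eq_or_ne k i with rfl | hk
        · rw [cvo (k - 1) (by omega), cvi]
          linarith
        rcases eq_or_ne k (i + 1) with rfl | hk1
        · rw [cvo (i + 1) (by omega), Nat.add_sub_cancel, cvi]
          linarith
        · rw [cvo k hk, cvo (k - 1) (by omega)]
          exact (hjump k h1k hkm).le
      have hq := hmin m tη cη ht0η htmη hmonoη hcmono
      have hmidη : ∀ k, 1 ≤ k → k ≤ m → 2 * (p * tη k + q) = cη (k - 1) + cη k := by
        intro k h1k hkm
        rcases eq_or_ne k i with rfl | hk
        · rw [tvi, cvo (k - 1) (by omega), cvi]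
          have hx : 2 * (p * (t k + η / (2 * p)) + q) = 2 * (p * t k + q) + η := by
            field_simp; ring
          rw [hx, hmid k h1k hkm]
          ring
        rcases eq_or_ne k (i + 1) with rfl | hk1
        · rw [tvi1, cvo (i + 1) (by omega), Nat.add_sub_cancel, cvi]
          have hx : 2 * (p * (t (i + 1) + η / (2 * p)) + q)
              = 2 * (p * t (i + 1) + q) + η := by field_simp; ring
          have h5 := hmid (i + 1) (by omega) hkm
          simp only [Nat.add_sub_cancel] at h5
          rw [hx, h5]
          ring
        · rw [tvo k hk hk1, cvo k hk, cvo (k - 1) (by omega)]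
          exact hmid k h1k hkm
      have hEη := kwc_energy_formula a b lam p q hp' m tη cη ht0η htmη hmonoη
      have hPU := kwc_phi_sum p q hp' t c m hm hmid
      have hPη := kwc_phi_sum p q hp' tη cη m hm hmidη
      have hEUval : stepEnergyAffine a b lam p q m t c
          = (∑ k ∈ Finset.Icc 1 m, (c k - c (k - 1)) / (1 + (c k - c (k - 1))))
            + (lam / 2) * (((c 0 - p * a - q) ^ 3 - (c m - p * b - q) ^ 3
              + ∑ k ∈ Finset.Icc 1 m, (c k - c (k - 1)) ^ 3 / 4) / (3 * p)) := by
        rw [hEU, ← Finset.sum_div, hPU, ht0, htm]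
      have hEηval : stepEnergyAffine a b lam p q m tη cη
          = (∑ k ∈ Finset.Icc 1 m, (cη k - cη (k - 1)) / (1 + (cη k - cη (k - 1))))
            + (lam / 2) * (((c 0 - p * a - q) ^ 3 - (c m - p * b - q) ^ 3
              + ∑ k ∈ Finset.Icc 1 m, (cη k - cη (k - 1)) ^ 3 / 4) / (3 * p)) := by
        rw [hEη, ← Finset.sum_div, hPη, ht0η, htmη, cvo 0 (by omega), cvo m (by omega)]
      have hvi : cη i - cη (i - 1) = c i - c (i - 1) + η := by
        rw [cvi, cvo (i - 1) (by omega)]; ring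
      have hvi1 : cη (i + 1) - cη i = c (i + 1) - c i - η := by
        rw [cvi, cvo (i + 1) (by omega)]; ring
      have hmemi : i ∈ Finset.Icc 1 m := Finset.mem_Icc.2 ⟨h1i, by omega⟩
      have hmemi1 : i + 1 ∈ Finset.Icc 1 m := Finset.mem_Icc.2 ⟨by omega, hi1m⟩
      have hdiffK := kwc_sum_diff_two (s := Finset.Icc 1 m)
        (f := fun k => (cη k - cη (k - 1)) / (1 + (cη k - cη (k - 1))))
        (g := fun k => (c k - c (k - 1)) / (1 + (c k - c (k - 1))))
        (i := i) (j := i + 1) (by omega) hmemi hmemi1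
        (by
          intro k hk hk1 hk2
          have h1k : 1 ≤ k := (Finset.mem_Icc.1 hk).1
          simp only [cvo k hk1, cvo (k - 1) (by omega)])
      have hdiffC := kwc_sum_diff_two (s := Finset.Icc 1 m)
        (f := fun k => (cη k - cη (k - 1)) ^ 3 / 4)
        (g := fun k => (c k - c (k - 1)) ^ 3 / 4)
        (i := i) (j := i + 1) (by omega) hmemi hmemi1
        (by
          intro k hk hk1 hk2
          have h1k : 1 ≤ k := (Finset.mem_Icc.1 hk).1
          simp only [cvo k hk1, cvo (k - 1) (by omega)])
      simp only [Nat.add_sub_cancel] at hdiffK hdiffC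
      rw [hvi, hvi1] at hdiffK hdiffC
      have hsub : (lam / 2) * (((c 0 - p * a - q) ^ 3 - (c m - p * b - q) ^ 3
              + ∑ k ∈ Finset.Icc 1 m, (cη k - cη (k - 1)) ^ 3 / 4) / (3 * p))
          - (lam / 2) * (((c 0 - p * a - q) ^ 3 - (c m - p * b - q) ^ 3
              + ∑ k ∈ Finset.Icc 1 m, (c k - c (k - 1)) ^ 3 / 4) / (3 * p))
          = lam / (6 * p) * ((∑ k ∈ Finset.Icc 1 m, (cη k - cη (k - 1)) ^ 3 / 4)
              - ∑ k ∈ Finset.Icc 1 m, (c k - c (k - 1)) ^ 3 / 4) := by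
        field_simp
        ring
      have hsub2 : lam / (6 * p) * ((∑ k ∈ Finset.Icc 1 m, (cη k - cη (k - 1)) ^ 3 / 4)
              - ∑ k ∈ Finset.Icc 1 m, (c k - c (k - 1)) ^ 3 / 4)
          = lam / (24 * p) * ((c i - c (i - 1) + η) ^ 3 + (c (i + 1) - c i - η) ^ 3)
            - lam / (24 * p) * ((c i - c (i - 1)) ^ 3 + (c (i + 1) - c i) ^ 3) := by
        rw [hdiffC]
        field_simp
        ring
      simp only [add_zero, sub_zero]
      rw [hEUval, hEηval] at hq
      linarith [hq, hdiffK, hsub, hsub2]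
    exact Filter.eventually_of_mem (Ioo_mem_nhds (by linarith) hε0) hmain
  -- chain to all jumps equal
  have hall : ∀ i, 1 ≤ i → i ≤ m → c i - c (i - 1) = c 1 - c 0 := by
    intro i
    induction i with
    | zero => omega
    | succ k ih =>
      intro _ hk
      rcases Nat.eq_zero_or_pos k with rfl | hkpos
      · simp
      · have h := hadj k hkpos (by omega)
        simp only [Nat.add_sub_cancel]
        rw [← h]
        exact ih hkpos (by omega)
  constructor
  · intro i j h1i him h1j hjm
    have gi1 := hmid i h1i (by omega)
    have gi2 := hmid (i + 1) (by omega) (by omega)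
    have gj1 := hmid j h1j (by omega)
    have gj2 := hmid (j + 1) (by omega) (by omega)
    simp only [Nat.add_sub_cancel] at gi2 gj2
    have ei1 := hall i h1i (by omega)
    have ei2 := hall (i + 1) (by omega) (by omega)
    have ej1 := hall j h1j (by omega)
    have ej2 := hall (j + 1) (by omega) (by omega)
    simp only [Nat.add_sub_cancel] at ei2 ej2
    have : 2 * p * (t (i + 1) - t i) = 2 * p * (t (j + 1) - t j) := by linarith
    have h2p : (2:ℝ) * p ≠ 0 := by positivity
    exact mul_left_cancel₀ h2p this
  · intro i j h1i him h1j hjm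
    rw [hall i h1i him, hall j h1j hjm]
end
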